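/- arXiv:1906.02781 — 2 statements merged into one kernel-verified Lean document; each statement's English description precedes it below -/
import Mathlib

section
/- For a finite graph G with a fixed total order on its edge set, the sum over all maximal spanning forests F of x^{|I(F)|} y^{|E(F)|}, where I(F) is the set of internally active edges and E(F) the set of externally active edges of F, equals the corank-nullity expansion sum over all subsets A of edges of (x-1)^{r(E)-r(A)} (y-1)^{|A|-r(A)}. In particular, the activities expansion is independent of the chosen total order on the edges. -/
noncomputable section
attribute [local instance] Classical.propDecidable

namespace TutteActivities

open Finset

variable {V ε : Type*} [Fintype V] [DecidableEq V] [Fintype ε] [DecidableEq ε]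

/- A multigraph on vertex set `V` is given by its edge-endpoint map
`ends : ε → V × V`; the ordered pair also serves as a reference orientation. -/

/-- The ordered endpoints of edge `e` when traversed in direction `b`. -/
def stepPair (ends : ε → V × V) (e : ε) (b : Bool) : V × V :=
  if b then ends e else (ends e).swap

/-- `S` is the edge set of a cycle: a closed walk using pairwise distinct edges. -/
def IsCyc (ends : ε → V × V) (S : Finset ε) : Prop :=
  ∃ (n : ℕ) (f : ℕ → ε) (d : ℕ → Bool), 0 < n ∧ Set.InjOn f (Set.Iio n) ∧
    S = (Finset.range n).image f ∧
    ∀ i < n, (stepPair ends (f i) (d i)).2 = (stepPair ends (f ((i + 1) % n)) (d ((i + 1) % n))).1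

/-- The set of edges crossing the vertex subset `X`. -/
def crossing (ends : ε → V × V) (X : Finset V) : Finset ε :=
  Finset.univ.filter fun e =>
    ((ends e).1 ∈ X ∧ (ends e).2 ∉ X) ∨ ((ends e).1 ∉ X ∧ (ends e).2 ∈ X)

/-- `S` is a (nonempty) cut: the set of edges crossing some vertex subset. -/
def IsCut (ends : ε → V × V) (S : Finset ε) : Prop :=
  S.Nonempty ∧ ∃ X : Finset V, S = crossing ends X

/-- A forest: a set of edges containing no cycle. -/
def Forest (ends : ε → V × V) (S : Finset ε) : Prop :=
  ∀ C ⊆ S, ¬ IsCyc ends C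

/-- The (graphic) rank of an edge set `A`: the maximum size of a forest inside `A`. -/
def grank (ends : ε → V × V) (A : Finset ε) : ℕ :=
  (A.powerset.filter (Forest ends)).sup Finset.card

/-- A maximal spanning forest. -/
def MaxForest (ends : ε → V × V) (F : Finset ε) : Prop :=
  Forest ends F ∧ ∀ F', Forest ends F' → F ⊆ F' → F' = F

/-- Edge `e ∈ F` is internally active: it is the smallest edge (for the labelling `σ`)
of its fundamental cut, the unique cut contained in `(E \ F) ∪ {e}`. -/
def IntAct (ends : ε → V × V) (σ : ε → ℕ) (F : Finset ε) (e : ε) : Prop :=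
  e ∈ F ∧ ∃ U, IsCut ends U ∧ U ⊆ insert e (Finset.univ \ F) ∧ e ∈ U ∧
    ∀ g ∈ U, σ e ≤ σ g

/-- Edge `e ∉ F` is externally active: it is the smallest edge (for the labelling `σ`)
of its fundamental cycle, the unique cycle contained in `F ∪ {e}`. -/
def ExtAct (ends : ε → V × V) (σ : ε → ℕ) (F : Finset ε) (e : ε) : Prop :=
  e ∉ F ∧ ∃ C, IsCyc ends C ∧ C ⊆ insert e F ∧ e ∈ C ∧ ∀ g ∈ C, σ e ≤ σ g

/-- One-step adjacency through an edge of `S`. -/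
def Adj (ends : ε → V × V) (S : Finset ε) (u v : V) : Prop :=
  ∃ e ∈ S, ends e = (u, v) ∨ ends e = (v, u)

/-- Reachability using edges of `S`. -/
def Reach (ends : ε → V × V) (S : Finset ε) : V → V → Prop :=
  Relation.ReflTransGen (Adj ends S)

/-- A spanning tree: a forest connecting every pair of vertices. -/
def SpanningTree (ends : ε → V × V) (T : Finset ε) : Prop :=
  Forest ends T ∧ ∀ u v : V, Reach ends T u v

/-- The ordered endpoints of `e` under the orientation `O` (`O e = true` means that
`e` agrees with the reference orientation given by `ends`). -/
def oEnds (ends : ε → V × V) (O : ε → Bool) (e : ε) : V × V :=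
  if O e then ends e else (ends e).swap

/-- `S` is the edge set of a directed cycle of the orientation `O`. -/
def IsDirCyc (ends : ε → V × V) (O : ε → Bool) (S : Finset ε) : Prop :=
  ∃ (n : ℕ) (f : ℕ → ε), 0 < n ∧ Set.InjOn f (Set.Iio n) ∧
    S = (Finset.range n).image f ∧
    ∀ i < n, (oEnds ends O (f i)).2 = (oEnds ends O (f ((i + 1) % n))).1

/-- `S` is a directed cut of the orientation `O`: a nonempty cut all of whose edges are
oriented from `X` to `Xᶜ`. -/
def IsDirCut (ends : ε → V × V) (O : ε → Bool) (S : Finset ε) : Prop :=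
  S.Nonempty ∧ ∃ X : Finset V, S = crossing ends X ∧
    ∀ e ∈ S, (oEnds ends O e).1 ∈ X ∧ (oEnds ends O e).2 ∉ X

/-- The corank-nullity (Whitney rank) expansion of the Tutte polynomial of the graph,
evaluated at `(x, y)`, with values in a commutative ring. -/
def gTutte {R : Type*} [CommRing R] (ends : ε → V × V) (x y : R) : R :=
  ∑ A ∈ (Finset.univ : Finset ε).powerset,
    (x - 1) ^ (grank ends Finset.univ - grank ends A) * (y - 1) ^ (A.card - grank ends A)

section Aux

set_option linter.unusedSectionVars false

variable (ends : ε → V × V)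

/-! ### Walks as lists -/

def chain : List (ε × Bool) → V → V → Prop
  | [], u, v => u = v
  | p :: l, u, v => (stepPair ends p.1 p.2).1 = u ∧ chain l (stepPair ends p.1 p.2).2 v

lemma chain_append {l₁ l₂ : List (ε × Bool)} {u v : V} :
    chain ends (l₁ ++ l₂) u v ↔ ∃ w, chain ends l₁ u w ∧ chain ends l₂ w v := by
  induction l₁ generalizing u with
  | nil => simp [chain]
  | cons p l ih => simp [chain, ih]; tauto

lemma adj_symm {S : Finset ε} {u v : V} (h : Adj ends S u v) : Adj ends S v u := by
  obtain ⟨e, he, h⟩ := h; exact ⟨e, he, h.symm⟩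

lemma reach_symm {S : Finset ε} {u v : V} (h : Reach ends S u v) : Reach ends S v u :=
  (@Relation.ReflTransGen.stdSymm _ _ ⟨fun _ _ => adj_symm ends⟩).symm _ _ h

lemma reach_trans {S : Finset ε} {u v w : V} (h : Reach ends S u v) (h' : Reach ends S v w) :
    Reach ends S u w := h.trans h'

lemma reach_mono {S T : Finset ε} (hST : S ⊆ T) {u v : V} (h : Reach ends S u v) :
    Reach ends T u v := by
  refine Relation.ReflTransGen.mono ?_ _ _ h
  rintro a b ⟨e, he, h⟩; exact ⟨e, hST he, h⟩

lemma reach_edge {S : Finset ε} {e : ε} (he : e ∈ S) : Reach ends S (ends e).1 (ends e).2 :=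
  Relation.ReflTransGen.single ⟨e, he, Or.inl rfl⟩

lemma adj_step {S : Finset ε} {e : ε} (b : Bool) (he : e ∈ S) :
    Adj ends S (stepPair ends e b).1 (stepPair ends e b).2 := by
  cases b
  · exact ⟨e, he, Or.inr (by simp [stepPair])⟩
  · exact ⟨e, he, Or.inl (by simp [stepPair])⟩

lemma reach_iff_chain {S : Finset ε} {u v : V} :
    Reach ends S u v ↔ ∃ l : List (ε × Bool), (∀ p ∈ l, p.1 ∈ S) ∧ chain ends l u v := by
  constructor
  · intro h
    induction h with
    | refl => exact ⟨[], by simp, rfl⟩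
    | tail _ hadj ih =>
      obtain ⟨l, hl, hc⟩ := ih
      obtain ⟨e, he, hcase⟩ := hadj
      rcases hcase with h1 | h1
      · refine ⟨l ++ [(e, true)], ?_, ?_⟩
        · intro p hp; rcases List.mem_append.1 hp with h | h
          · exact hl p h
          · simp at h; simp [h, he]
        · rw [chain_append]; exact ⟨_, hc, by simp [chain, stepPair, h1]⟩
      · refine ⟨l ++ [(e, false)], ?_, ?_⟩
        · intro p hp; rcases List.mem_append.1 hp with h | h
          · exact hl p h
          · simp at h; simp [h, he]
        · rw [chain_append]; exact ⟨_, hc, by simp [chain, stepPair, h1]⟩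
  · rintro ⟨l, hl, hc⟩
    induction l generalizing u with
    | nil => cases hc; exact Relation.ReflTransGen.refl
    | cons p l ih =>
      obtain ⟨h1, h2⟩ := hc
      refine Relation.ReflTransGen.head (h1 ▸ adj_step ends p.2 (hl p (by simp))) ?_
      exact ih (fun q hq => hl q (by simp [hq])) h2

lemma nodup_or_split (l : List (ε × Bool)) :
    (l.map Prod.fst).Nodup ∨
      ∃ (l₁ : List (ε × Bool)) (p : ε × Bool) (l₂ : List (ε × Bool)) (q : ε × Bool)
        (l₃ : List (ε × Bool)), l = l₁ ++ ((p :: l₂) ++ (q :: l₃)) ∧ p.1 = q.1 := by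
  induction l with
  | nil => left; simp
  | cons p l ih =>
    rcases ih with h | ⟨l₁, p', l₂, q, l₃, rfl, hpq⟩
    · by_cases hmem : p.1 ∈ l.map Prod.fst
      · obtain ⟨q, hq, hq1⟩ := List.exists_of_mem_map hmem
        obtain ⟨l₂, l₃, rfl⟩ := List.append_of_mem hq
        exact Or.inr ⟨[], p, l₂, q, l₃, by simp, hq1.symm⟩
      · left; rw [List.map_cons]; exact List.nodup_cons.2 ⟨hmem, h⟩
    · exact Or.inr ⟨p :: l₁, p', l₂, q, l₃, by simp, hpq⟩

lemma exists_nodup_chain {S : Finset ε} {u v : V} {l : List (ε × Bool)}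
    (hl : ∀ p ∈ l, p.1 ∈ S) (hc : chain ends l u v) :
    ∃ l' : List (ε × Bool), (∀ p ∈ l', p.1 ∈ S) ∧ (l'.map Prod.fst).Nodup ∧
      chain ends l' u v := by
  obtain ⟨n, hn⟩ : ∃ n, l.length ≤ n := ⟨l.length, le_rfl⟩
  induction n generalizing l u with
  | zero =>
    rw [Nat.le_zero, List.length_eq_zero_iff] at hn; subst hn
    exact ⟨[], by simp, by simp, hc⟩
  | succ n ih =>
    rcases nodup_or_split l with h | ⟨l₁, p, l₂, q, l₃, hsplit, hpq⟩
    · exact ⟨l, hl, h, hc⟩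
    · subst hsplit
      rw [chain_append] at hc
      obtain ⟨w₀, hc₁, hc2⟩ := hc
      rw [chain_append] at hc2
      obtain ⟨w₂, hcp, hcq⟩ := hc2
      obtain ⟨hp1, hcl₂⟩ := hcp
      obtain ⟨hq1, hc₅⟩ := hcq
      by_cases hd : p.2 = q.2
      · have hsp : stepPair ends p.1 p.2 = stepPair ends q.1 q.2 := by rw [hpq, hd]
        refine ih (l := l₁ ++ p :: l₃) ?_ ?_ ?_
        · intro r hr; apply hl; simp at hr ⊢; tauto
        · rw [chain_append]
          exact ⟨w₀, hc₁, hp1, by rw [hsp]; exact hc₅⟩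
        · simp at hn ⊢; omega
      · have hsp : stepPair ends q.1 q.2 = (stepPair ends p.1 p.2).swap := by
          rw [← hpq]; rcases hb : p.2 with _|_ <;> rcases hb' : q.2 with _|_ <;>
            simp_all [stepPair]
        refine ih (l := l₁ ++ l₃) ?_ ?_ ?_
        · intro r hr; apply hl; simp at hr ⊢; tauto
        · rw [chain_append]
          refine ⟨w₀, hc₁, ?_⟩
          have h2 : (stepPair ends q.1 q.2).2 = w₀ := by rw [hsp]; simpa using hp1
          rwa [h2] at hc₅
        · simp at hn ⊢; omega

/-! ### Cycles and lists -/

lemma chain_last : ∀ (l : List (ε × Bool)) (u v : V), chain ends l u v → (hne : l ≠ []) →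
    (stepPair ends (l.getLast hne).1 (l.getLast hne).2).2 = v := by
  intro l
  induction l with
  | nil => intro u v _ hne; exact absurd rfl hne
  | cons p l ih =>
    intro u v hc hne
    obtain ⟨h1, h2⟩ := hc
    cases l with
    | nil => exact h2
    | cons q l => rw [List.getLast_cons (by simp)]; exact ih _ _ h2 (by simp)

lemma chain_head {l : List (ε × Bool)} {u v : V} (hc : chain ends l u v) (hne : l ≠ []) :
    (stepPair ends (l.head hne).1 (l.head hne).2).1 = u := by
  cases l with
  | nil => exact absurd rfl hne
  | cons p l => exact hc.1

lemma chain_chain' : ∀ (l : List (ε × Bool)) (u v : V), chain ends l u v →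
    List.Chain' (fun p q : ε × Bool =>
      (stepPair ends p.1 p.2).2 = (stepPair ends q.1 q.2).1) l := by
  intro l
  induction l with
  | nil => intro _ _ _; exact List.IsChain.nil
  | cons p l ih =>
    intro u v hc
    obtain ⟨h1, h2⟩ := hc
    refine List.isChain_cons.2 ⟨?_, ih _ _ h2⟩
    intro q hq
    cases l with
    | nil => simp at hq
    | cons r l =>
      simp at hq
      rw [← hq]
      exact h2.1.symm

lemma chain_of_parts : ∀ (l : List (ε × Bool)) (u v : V) (hne : l ≠ []),
    (stepPair ends (l.head hne).1 (l.head hne).2).1 = u →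
    (stepPair ends (l.getLast hne).1 (l.getLast hne).2).2 = v →
    List.Chain' (fun p q : ε × Bool =>
      (stepPair ends p.1 p.2).2 = (stepPair ends q.1 q.2).1) l →
    chain ends l u v := by
  intro l
  induction l with
  | nil => intro _ _ hne; exact absurd rfl hne
  | cons p l ih =>
    intro u v _ hh hl hch
    refine ⟨hh, ?_⟩
    cases l with
    | nil => exact hl
    | cons q l =>
      have hch' := List.isChain_cons_cons.1 hch
      simp only [List.getLast_cons_cons] at hl
      refine ih _ _ (by simp) ?_ hl hch'.2
      simp only [List.head_cons]
      exact hch'.1.symm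

lemma cyc_of_list {l : List (ε × Bool)} {u : V} (hne : l ≠ [])
    (hnd : (l.map Prod.fst).Nodup) (hc : chain ends l u u) :
    IsCyc ends (l.map Prod.fst).toFinset := by
  have hpos : 0 < l.length := List.length_pos_iff.2 hne
  set g : ℕ → ε × Bool := fun i => l.getD i (l.head hne) with hgdef
  have hg : ∀ (i : ℕ) (h : i < l.length), g i = l.get ⟨i, h⟩ := fun i h =>
    (List.getD_eq_getElem l _ h).trans (List.get_eq_getElem (l := l) (i := ⟨i, h⟩)).symm
  set f : ℕ → ε := fun i => (g i).1 with hfdef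
  set d : ℕ → Bool := fun i => (g i).2 with hddef
  have hf : ∀ (i : ℕ) (h : i < l.length), f i = (l.get ⟨i, h⟩).1 :=
    fun i h => congrArg Prod.fst (hg i h)
  have hd : ∀ (i : ℕ) (h : i < l.length), d i = (l.get ⟨i, h⟩).2 :=
    fun i h => congrArg Prod.snd (hg i h)
  have hgetinj := List.nodup_iff_injective_get.1 hnd
  refine ⟨l.length, f, d, hpos, ?_, ?_, ?_⟩
  · intro i hi j hj hij
    simp only [Set.mem_Iio] at hi hj
    rw [hf i hi, hf j hj] at hij
    have h1 : ((l.map Prod.fst).get ⟨i, by simpa⟩) = ((l.map Prod.fst).get ⟨j, by simpa⟩) := by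
      simp only [List.get_eq_getElem, List.getElem_map]
      exact hij
    have := hgetinj h1
    simpa using this
  · ext e
    simp only [Finset.mem_image, Finset.mem_range, List.mem_toFinset, List.mem_map]
    constructor
    · rintro ⟨p, hp, rfl⟩
      obtain ⟨i, rfl⟩ := List.get_of_mem hp
      exact ⟨i.1, i.2, hf i.1 i.2⟩
    · rintro ⟨i, hi, rfl⟩
      exact ⟨l.get ⟨i, hi⟩, List.get_mem _ _, (hf i hi).symm⟩
  · intro i hi
    rcases Nat.lt_or_ge (i+1) l.length with h | h
    · rw [Nat.mod_eq_of_lt h, hf i hi, hd i hi, hf (i+1) h, hd (i+1) h]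
      exact (List.isChain_iff_getElem.1 (chain_chain' ends l u u hc)) i (by omega)
    · have hin : i = l.length - 1 := by omega
      have hmod : (i+1) % l.length = 0 := by
        have h1 : i + 1 = l.length := by omega
        rw [h1, Nat.mod_self]
      rw [hmod, hf i hi, hd i hi, hf 0 hpos, hd 0 hpos]
      have h1 : (stepPair ends (l.get ⟨i, hi⟩).1 (l.get ⟨i, hi⟩).2).2 = u := by
        have h2 := chain_last ends l u u hc hne
        have h3 : l.getLast hne = l.get ⟨i, hi⟩ := by
          rw [List.getLast_eq_getElem hne]
          subst hin
          rfl
        rwa [h3] at h2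
      have h2 : (stepPair ends (l.get ⟨0, hpos⟩).1 (l.get ⟨0, hpos⟩).2).1 = u := by
        have h3 := chain_head ends hc hne
        rwa [← List.get_mk_zero hpos] at h3
      rw [h1, h2]

lemma list_of_cyc {S : Finset ε} (h : IsCyc ends S) :
    ∃ (u : V) (l : List (ε × Bool)), l ≠ [] ∧ (l.map Prod.fst).Nodup ∧
      S = (l.map Prod.fst).toFinset ∧ chain ends l u u := by
  obtain ⟨n, f, d, hpos, hinj, hS, hstep⟩ := h
  set l : List (ε × Bool) := (List.range n).map (fun i => (f i, d i)) with hl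
  have hlen : l.length = n := by simp [hl]
  have hne : l ≠ [] := by
    intro h0; rw [h0] at hlen; simp at hlen; omega
  have hget : ∀ (i : ℕ) (h : i < l.length), l.get ⟨i, h⟩ = (f i, d i) := by
    intro i h
    simp [hl]
  refine ⟨(stepPair ends (f 0) (d 0)).1, l, hne, ?_, ?_, ?_⟩
  · have h1 : l.map Prod.fst = (List.range n).map f := by
      simp [hl, Function.comp]
    rw [h1]
    exact List.Nodup.map_on (fun i hi j hj hij => hinj (by simpa using hi) (by simpa using hj) hij)
      List.nodup_range
  · rw [hS]; ext e
    simp [hl, Function.comp]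
  · refine chain_of_parts ends l _ _ hne ?_ ?_ ?_
    · rw [← List.get_mk_zero (by omega), hget 0 (by omega)]
    · have e := hget (l.length - 1) (by omega)
      simp only [List.get_eq_getElem] at e
      rw [List.getLast_eq_getElem hne, e]
      have h1 := hstep (n - 1) (by omega)
      have h2 : (n - 1 + 1) % n = 0 := by
        have h3 : n - 1 + 1 = n := by omega
        rw [h3, Nat.mod_self]
      rw [h2] at h1
      simp only [hlen]
      exact h1
    · refine List.isChain_iff_getElem.2 ?_
      intro i hi
      have e1 := hget i (by omega)
      have e2 := hget (i+1) (by omega)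
      simp only [List.get_eq_getElem] at e1 e2
      rw [e1, e2]
      have h1 := hstep i (by rw [hlen] at hi; omega)
      rwa [Nat.mod_eq_of_lt (by rw [hlen] at hi; omega)] at h1

/-! ### Cycles, reachability, forests -/

lemma reach_of_cycle {C : Finset ε} {e : ε} (h : IsCyc ends C) (he : e ∈ C) :
    Reach ends (C.erase e) (ends e).1 (ends e).2 := by
  obtain ⟨u, l, hne, hnd, hCS, hc⟩ := list_of_cyc ends h
  have hem : e ∈ l.map Prod.fst := by rw [hCS] at he; simpa using he
  obtain ⟨p, hp, hpe⟩ := List.exists_of_mem_map hem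
  obtain ⟨l₁, l₂, rfl⟩ := List.append_of_mem hp
  rw [chain_append] at hc
  obtain ⟨w₁, hc₁, hp1, hc₂⟩ := hc
  have hnodup : p.1 ∉ (l₁.map Prod.fst) ∧ p.1 ∉ (l₂.map Prod.fst) := by
    have hnd' : ((l₁.map Prod.fst) ++ p.1 :: (l₂.map Prod.fst)).Nodup := by simpa using hnd
    rw [List.nodup_append] at hnd'
    obtain ⟨nd1, nd2, disj⟩ := hnd'
    exact ⟨fun hmem => disj _ hmem _ List.mem_cons_self rfl, (List.nodup_cons.1 nd2).1⟩
  have hmem : ∀ q ∈ l₂ ++ l₁, q.1 ∈ C.erase e := by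
    intro q hq
    have hqC : q.1 ∈ C := by
      rw [hCS]; simp only [List.mem_toFinset, List.mem_map]
      exact ⟨q, by simp at hq ⊢; tauto, rfl⟩
    have hqe : q.1 ≠ e := by
      rw [← hpe]
      intro hcontra
      rcases List.mem_append.1 hq with h' | h'
      · exact hnodup.2 (hcontra ▸ List.mem_map_of_mem (f := Prod.fst) h')
      · exact hnodup.1 (hcontra ▸ List.mem_map_of_mem (f := Prod.fst) h')
    exact Finset.mem_erase.2 ⟨hqe, hqC⟩
  have hreach : Reach ends (C.erase e) (stepPair ends p.1 p.2).2 (stepPair ends p.1 p.2).1 := by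
    rw [reach_iff_chain]
    exact ⟨l₂ ++ l₁, hmem, (chain_append ends).2 ⟨u, hc₂, hp1 ▸ hc₁⟩⟩
  rw [hpe] at hreach
  rcases hb : p.2 with _ | _ <;> rw [hb] at hreach <;> simp [stepPair] at hreach
  · exact hreach
  · exact reach_symm ends hreach

lemma cycle_of_reach {S : Finset ε} {e : ε} (heS : e ∉ S)
    (h : Reach ends S (ends e).1 (ends e).2) :
    ∃ C, IsCyc ends C ∧ C ⊆ insert e S ∧ e ∈ C := by
  have h' := reach_symm ends h
  rw [reach_iff_chain] at h'
  obtain ⟨l, hl, hc⟩ := h'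
  obtain ⟨l', hl', hnd', hc'⟩ := exists_nodup_chain ends hl hc
  refine ⟨(((e, true) :: l').map Prod.fst).toFinset, ?_, ?_, ?_⟩
  · refine cyc_of_list ends (by simp) ?_ ?_ (u := (ends e).1)
    · simp only [List.map_cons, List.nodup_cons]
      exact ⟨fun hmem => heS (by obtain ⟨q, hq, hqe⟩ := List.exists_of_mem_map hmem
                                 exact hqe ▸ hl' q hq), hnd'⟩
    · exact ⟨by simp [stepPair], by simpa [stepPair] using hc'⟩
  · intro g hg
    simp only [List.map_cons, List.mem_toFinset, List.mem_cons] at hg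
    rcases hg with rfl | hg
    · exact Finset.mem_insert_self _ _
    · obtain ⟨q, hq, hqe⟩ := List.mem_map.1 hg
      exact Finset.mem_insert_of_mem (hqe ▸ hl' q hq)
  · simp

lemma forest_subset {S T : Finset ε} (hS : Forest ends S) (hTS : T ⊆ S) : Forest ends T :=
  fun C hC => hS C (hC.trans hTS)

lemma forest_insert {S : Finset ε} {e : ε} (hS : Forest ends S) (he : e ∉ S)
    (hnr : ¬ Reach ends S (ends e).1 (ends e).2) : Forest ends (insert e S) := by
  intro C hC hcyc
  by_cases heC : e ∈ C
  · have := reach_of_cycle ends hcyc heC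
    refine hnr (reach_mono ends ?_ this)
    intro g hg
    rcases Finset.mem_erase.1 hg with ⟨hge, hgC⟩
    rcases Finset.mem_insert.1 (hC hgC) with rfl | h'
    · exact absurd rfl hge
    · exact h'
  · refine hS C ?_ hcyc
    intro g hg
    rcases Finset.mem_insert.1 (hC hg) with rfl | h'
    · exact absurd hg heC
    · exact h'

lemma maxForest_iff {F : Finset ε} :
    MaxForest ends F ↔ Forest ends F ∧ ∀ e : ε, Reach ends F (ends e).1 (ends e).2 := by
  constructor
  · rintro ⟨hF, hmax⟩
    refine ⟨hF, fun e => ?_⟩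
    by_cases heF : e ∈ F
    · exact reach_edge ends heF
    · by_contra hnr
      have h1 := forest_insert ends hF heF hnr
      have h2 := hmax _ h1 (Finset.subset_insert _ _)
      exact heF (h2 ▸ Finset.mem_insert_self e F)
  · rintro ⟨hF, hreach⟩
    refine ⟨hF, fun F' hF' hFF' => ?_⟩
    by_contra hne
    obtain ⟨e, heF', heF⟩ : ∃ e, e ∈ F' ∧ e ∉ F := by
      by_contra hcon
      push_neg at hcon
      exact hne (Finset.Subset.antisymm hcon hFF')
    obtain ⟨C, hcyc, hsub, _⟩ := cycle_of_reach ends heF (hreach e)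
    refine hF' C (hsub.trans ?_) hcyc
    exact Finset.insert_subset heF' hFF'

lemma exists_maxForest {B : Finset ε} (hB : Forest ends B) :
    ∃ F, MaxForest ends F ∧ B ⊆ F := by
  classical
  obtain ⟨F, hF, hmax⟩ := Finset.exists_max_image
    (Finset.univ.powerset.filter (fun S => Forest ends S ∧ B ⊆ S)) Finset.card
    ⟨B, by simp [hB]⟩
  simp only [Finset.mem_filter, Finset.mem_powerset] at hF
  refine ⟨F, ⟨hF.2.1, fun F' hF' hsub => ?_⟩, hF.2.2⟩
  have hF'mem : F' ∈ Finset.univ.powerset.filter (fun S => Forest ends S ∧ B ⊆ S) := by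
    simp [hF', hF.2.2.trans hsub]
  exact (Finset.eq_of_subset_of_card_le hsub (hmax F' hF'mem)).symm

lemma fund_cycle {F : Finset ε} (hF : MaxForest ends F) {e : ε} (he : e ∉ F) :
    ∃ C, IsCyc ends C ∧ C ⊆ insert e F ∧ e ∈ C :=
  cycle_of_reach ends he (((maxForest_iff ends).1 hF).2 e)

/-! ### Components and rank -/

def comp (S : Finset ε) (v : V) : Finset V := Finset.univ.filter (fun w => Reach ends S v w)

def compCount (S : Finset ε) : ℕ := (Finset.univ.image (comp ends S)).card

lemma mem_comp {S : Finset ε} {v w : V} : w ∈ comp ends S v ↔ Reach ends S v w := by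
  simp [comp]

lemma self_mem_comp {S : Finset ε} {v : V} : v ∈ comp ends S v :=
  (mem_comp ends).2 Relation.ReflTransGen.refl

lemma comp_eq_iff {S : Finset ε} {v w : V} :
    comp ends S v = comp ends S w ↔ Reach ends S v w := by
  constructor
  · intro h
    have : w ∈ comp ends S v := h ▸ self_mem_comp ends
    exact (mem_comp ends).1 this
  · intro h
    ext x
    rw [mem_comp, mem_comp]
    exact ⟨fun h' => (reach_symm ends h).trans h', fun h' => h.trans h'⟩

lemma reach_empty {u v : V} : Reach ends (∅ : Finset ε) u v ↔ u = v := by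
  constructor
  · intro h
    induction h with
    | refl => rfl
    | tail _ hadj _ => obtain ⟨e, he, _⟩ := hadj; simp at he
  · rintro rfl; exact Relation.ReflTransGen.refl

lemma reach_insert {S : Finset ε} {e : ε} {a b : V} :
    Reach ends (insert e S) a b ↔ Reach ends S a b ∨
      (Reach ends S a (ends e).1 ∧ Reach ends S (ends e).2 b) ∨
      (Reach ends S a (ends e).2 ∧ Reach ends S (ends e).1 b) := by
  constructor
  · intro h
    induction h with
    | refl => exact Or.inl Relation.ReflTransGen.refl
    | @tail b c hab hadj ih =>
      obtain ⟨g, hg, hor⟩ := hadj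
      rcases Finset.mem_insert.1 hg with rfl | hgS
      · have huv : ((ends g).1 = b ∧ (ends g).2 = c) ∨ ((ends g).1 = c ∧ (ends g).2 = b) := by
          rcases hor with h1 | h1
          · exact Or.inl ⟨by rw [h1], by rw [h1]⟩
          · exact Or.inr ⟨by rw [h1], by rw [h1]⟩
        rcases huv with ⟨hu, hv⟩ | ⟨hu, hv⟩
        · rcases ih with h2 | ⟨h2, h3⟩ | ⟨h2, h3⟩
          · exact Or.inr (Or.inl ⟨hu ▸ h2, hv ▸ Relation.ReflTransGen.refl⟩)
          · exact Or.inr (Or.inl ⟨h2, hv ▸ Relation.ReflTransGen.refl⟩)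
          · exact Or.inl (hv ▸ h2)
        · rcases ih with h2 | ⟨h2, h3⟩ | ⟨h2, h3⟩
          · exact Or.inr (Or.inr ⟨hv ▸ h2, hu ▸ Relation.ReflTransGen.refl⟩)
          · exact Or.inl (hu ▸ h2)
          · exact Or.inr (Or.inr ⟨h2, hu ▸ Relation.ReflTransGen.refl⟩)
      · rcases ih with h2 | ⟨h2, h3⟩ | ⟨h2, h3⟩
        · exact Or.inl (h2.tail ⟨g, hgS, hor⟩)
        · exact Or.inr (Or.inl ⟨h2, h3.tail ⟨g, hgS, hor⟩⟩)
        · exact Or.inr (Or.inr ⟨h2, h3.tail ⟨g, hgS, hor⟩⟩)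
  · intro h
    have hsub : S ⊆ insert e S := Finset.subset_insert _ _
    have hedge : Reach ends (insert e S) (ends e).1 (ends e).2 :=
      reach_edge ends (Finset.mem_insert_self _ _)
    rcases h with h1 | ⟨h1, h2⟩ | ⟨h1, h2⟩
    · exact reach_mono ends hsub h1
    · exact ((reach_mono ends hsub h1).trans hedge).trans (reach_mono ends hsub h2)
    · exact ((reach_mono ends hsub h1).trans (reach_symm ends hedge)).trans
        (reach_mono ends hsub h2)

lemma comp_insert_eq {S : Finset ε} {e : ε} {a : V}
    (hnr : ¬ Reach ends S (ends e).1 (ends e).2) :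
    comp ends (insert e S) a =
      if Reach ends S a (ends e).1 ∨ Reach ends S a (ends e).2
      then comp ends S (ends e).1 ∪ comp ends S (ends e).2
      else comp ends S a := by
  set u := (ends e).1
  set v := (ends e).2
  split_ifs with ht
  · ext b
    simp only [mem_comp, Finset.mem_union]
    rw [reach_insert]
    constructor
    · rintro (h1 | ⟨h1, h2⟩ | ⟨h1, h2⟩)
      · rcases ht with h3 | h3
        · exact Or.inl ((reach_symm ends h3).trans h1)
        · exact Or.inr ((reach_symm ends h3).trans h1)
      · exact Or.inr h2
      · exact Or.inl h2
    · rintro (h1 | h1)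
      · rcases ht with h3 | h3
        · exact Or.inl (h3.trans h1)
        · exact Or.inr (Or.inr ⟨h3, h1⟩)
      · rcases ht with h3 | h3
        · exact Or.inr (Or.inl ⟨h3, h1⟩)
        · exact Or.inl (h3.trans h1)
  · push_neg at ht
    ext b
    simp only [mem_comp]
    rw [reach_insert]
    constructor
    · rintro (h1 | ⟨h1, h2⟩ | ⟨h1, h2⟩)
      · exact h1
      · exact absurd h1 ht.1
      · exact absurd h1 ht.2
    · exact fun h1 => Or.inl h1

lemma comp_merge {S : Finset ε} {e : ε}
    (hnr : ¬ Reach ends S (ends e).1 (ends e).2) :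
    compCount ends (insert e S) + 1 = compCount ends S := by
  classical
  set u := (ends e).1 with hu
  set v := (ends e).2 with hv
  set U := comp ends S u with hU
  set Vc := comp ends S v with hVc
  set M := U ∪ Vc with hM
  set R := (Finset.univ.image (comp ends S)).filter (fun c => c ≠ U ∧ c ≠ Vc) with hR
  have hUV : U ≠ Vc := by
    intro h
    exact hnr ((comp_eq_iff ends).1 h)
  have hSimage : Finset.univ.image (comp ends S) = insert U (insert Vc R) := by
    ext c
    simp only [Finset.mem_insert, hR, Finset.mem_filter, Finset.mem_image, Finset.mem_univ,
      true_and]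
    constructor
    · rintro ⟨a, rfl⟩
      by_cases h1 : comp ends S a = U
      · exact Or.inl h1
      · by_cases h2 : comp ends S a = Vc
        · exact Or.inr (Or.inl h2)
        · exact Or.inr (Or.inr ⟨⟨a, rfl⟩, h1, h2⟩)
    · rintro (rfl | rfl | ⟨⟨a, rfl⟩, _, _⟩)
      · exact ⟨u, rfl⟩
      · exact ⟨v, rfl⟩
      · exact ⟨a, rfl⟩
  have hTimage : Finset.univ.image (comp ends (insert e S)) = insert M R := by
    ext c
    simp only [Finset.mem_insert, hR, Finset.mem_filter, Finset.mem_image, Finset.mem_univ,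
      true_and]
    constructor
    · rintro ⟨a, rfl⟩
      rw [comp_insert_eq ends hnr]
      split_ifs with ht
      · exact Or.inl rfl
      · push_neg at ht
        refine Or.inr ⟨⟨a, rfl⟩, ?_, ?_⟩
        · rw [hU]; intro hcon; exact ht.1 ((comp_eq_iff ends).1 hcon)
        · rw [hVc]; intro hcon; exact ht.2 ((comp_eq_iff ends).1 hcon)
    · rintro (rfl | ⟨⟨a, rfl⟩, h1, h2⟩)
      · refine ⟨u, ?_⟩
        have hru : Reach ends S u (ends e).1 := Relation.ReflTransGen.refl
        rw [comp_insert_eq ends hnr, if_pos (Or.inl hru)]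
      · refine ⟨a, ?_⟩
        rw [comp_insert_eq ends hnr, if_neg]
        push_neg
        constructor
        · intro hcon; exact h1 ((comp_eq_iff ends).2 hcon)
        · intro hcon; exact h2 ((comp_eq_iff ends).2 hcon)
  have hMnotR : M ∉ R := by
    rw [hR]
    simp only [Finset.mem_filter, Finset.mem_image, Finset.mem_univ, true_and]
    rintro ⟨⟨a, ha⟩, h1, h2⟩
    have hua : u ∈ comp ends S a := ha.symm ▸ (Finset.mem_union_left _ (self_mem_comp ends))
    have hva : v ∈ comp ends S a := ha.symm ▸ (Finset.mem_union_right _ (self_mem_comp ends))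
    exact hnr ((reach_symm ends ((mem_comp ends).1 hua)).trans ((mem_comp ends).1 hva))
  have hUnotR : U ∉ insert Vc R := by
    simp only [Finset.mem_insert, hR, Finset.mem_filter]
    rintro (h | ⟨_, h, _⟩)
    · exact hUV h
    · exact h rfl
  have hVnotR : Vc ∉ R := by
    rw [hR]
    simp only [Finset.mem_filter]
    rintro ⟨_, _, h⟩
    exact h rfl
  rw [compCount, compCount, hSimage, hTimage,
    Finset.card_insert_of_notMem hMnotR, Finset.card_insert_of_notMem hUnotR,
    Finset.card_insert_of_notMem hVnotR]

lemma compCount_empty : compCount ends (∅ : Finset ε) = Fintype.card V := by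
  have h1 : ∀ v : V, comp ends (∅ : Finset ε) v = {v} := by
    intro v; ext w; simp [mem_comp, reach_empty, eq_comm]
  rw [compCount]
  have h2 : Finset.univ.image (comp ends (∅ : Finset ε)) =
      Finset.univ.image (fun v : V => ({v} : Finset V)) := by
    apply Finset.image_congr; intro v _; exact h1 v
  rw [h2, Finset.card_image_of_injective _ (fun a b h => Finset.singleton_injective h)]
  simp

lemma reach_le_of_edges {S B : Finset ε}
    (h : ∀ g ∈ S, Reach ends B (ends g).1 (ends g).2) {a b : V} (hr : Reach ends S a b) :
    Reach ends B a b := by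
  induction hr with
  | refl => exact Relation.ReflTransGen.refl
  | @tail x y _ hadj ih =>
    obtain ⟨g, hg, hor⟩ := hadj
    refine ih.trans ?_
    rcases hor with h1 | h1
    · have := h g hg; rw [h1] at this; exact this
    · have := h g hg; rw [h1] at this; exact reach_symm ends this

lemma compCount_le {S B : Finset ε}
    (h : ∀ a b : V, Reach ends S a b → Reach ends B a b) :
    compCount ends B ≤ compCount ends S := by
  classical
  apply Finset.card_le_card_of_surjOn
    (fun c : Finset V => if hc : c.Nonempty then comp ends B hc.choose else ∅)
  intro c hc
  simp only [Finset.coe_image, Set.mem_image, Finset.mem_coe, Finset.mem_image] at hc ⊢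
  obtain ⟨a, _, rfl⟩ := hc
  refine ⟨comp ends S a, ⟨a, Finset.mem_univ a, rfl⟩, ?_⟩
  have hne : (comp ends S a).Nonempty := ⟨a, self_mem_comp ends⟩
  rw [dif_pos hne]
  have hmem := hne.choose_spec
  rw [mem_comp] at hmem
  exact (comp_eq_iff ends).2 (reach_symm ends (h _ _ hmem))

lemma forest_card : ∀ (S : Finset ε), Forest ends S →
    S.card + compCount ends S = Fintype.card V := by
  intro S
  induction S using Finset.strongInductionOn with
  | _ S ih =>
    intro hS
    rcases S.eq_empty_or_nonempty with rfl | ⟨f, hf⟩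
    · rw [compCount_empty]; simp
    · have hfe : f ∉ S.erase f := Finset.notMem_erase f S
      have hnr : ¬ Reach ends (S.erase f) (ends f).1 (ends f).2 := by
        intro hr
        obtain ⟨C, hcyc, hsub, _⟩ := cycle_of_reach ends hfe hr
        rw [Finset.insert_erase hf] at hsub
        exact hS C hsub hcyc
      have hmerge := comp_merge ends hnr
      rw [Finset.insert_erase hf] at hmerge
      have hIH := ih (S.erase f) (Finset.erase_ssubset hf)
        (forest_subset ends hS (Finset.erase_subset _ _))
      have hcard : (S.erase f).card = S.card - 1 := Finset.card_erase_of_mem hf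
      have hpos : 0 < S.card := Finset.card_pos.2 ⟨f, hf⟩
      omega

lemma grank_eq_of_basis {A B : Finset ε} (hBA : B ⊆ A) (hB : Forest ends B)
    (hspan : ∀ g ∈ A, Reach ends B (ends g).1 (ends g).2) : grank ends A = B.card := by
  apply le_antisymm
  · apply Finset.sup_le
    intro T hT
    simp only [Finset.mem_filter, Finset.mem_powerset] at hT
    obtain ⟨hTA, hTf⟩ := hT
    have h1 : ∀ a b : V, Reach ends T a b → Reach ends B a b :=
      fun a b hr => reach_le_of_edges ends (fun g hg => hspan g (hTA hg)) hr
    have h2 := compCount_le ends h1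
    have h3 := forest_card ends T hTf
    have h4 := forest_card ends B hB
    omega
  · exact Finset.le_sup (by simp only [Finset.mem_filter, Finset.mem_powerset]; exact ⟨hBA, hB⟩)

/-! ### Parity: a cycle meets a cut in an even number of edges -/

lemma crossing_mem_iff' {X : Finset V} {e : ε} (b : Bool) :
    e ∈ crossing ends X ↔
      ¬ (((stepPair ends e b).1 ∈ X) ↔ ((stepPair ends e b).2 ∈ X)) := by
  cases b <;> simp [crossing, stepPair] <;> tauto

lemma chain_parity {X : Finset V} : ∀ (l : List (ε × Bool)) (a b : V), chain ends l a b →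
    (Even (l.countP (fun p => decide (p.1 ∈ crossing ends X))) ↔ ((a ∈ X) ↔ (b ∈ X))) := by
  intro l
  induction l with
  | nil =>
    intro a b h; cases h; simp
  | cons p l ih =>
    intro a b h
    obtain ⟨h1, h2⟩ := h
    rw [List.countP_cons]
    set m := (stepPair ends p.1 p.2).2 with hm
    have hc : (p.1 ∈ crossing ends X) ↔ ¬ ((a ∈ X) ↔ (m ∈ X)) := by
      rw [crossing_mem_iff' ends p.2, h1, ← hm]
    have ihm := ih m b h2
    have hi : (Even (if (fun p : ε × Bool => decide (p.1 ∈ crossing ends X)) p = true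
        then 1 else 0) ↔ ((a ∈ X) ↔ (m ∈ X))) := by
      by_cases hx : p.1 ∈ crossing ends X
      · simp only [hx, decide_true, if_pos]
        exact iff_of_false (by decide) (hc.1 hx)
      · simp only [hx, decide_false]
        exact iff_of_true (by simp) (of_not_not (fun hn => hx (hc.2 hn)))
    rw [Nat.even_add, ihm, hi]
    tauto

lemma cycle_cut_even {C U : Finset ε} (hC : IsCyc ends C) (hU : IsCut ends U) :
    Even (C ∩ U).card := by
  obtain ⟨_, X, rfl⟩ := hU
  obtain ⟨u, l, hne, hnd, rfl, hc⟩ := list_of_cyc ends hC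
  have hpar := (chain_parity ends (X := X) l u u hc).2 Iff.rfl
  have h1 : ((l.map Prod.fst).toFinset ∩ crossing ends X) =
      ((l.map Prod.fst).filter (fun g => g ∈ crossing ends X)).toFinset := by
    ext g
    simp only [Finset.mem_inter, List.mem_toFinset, List.mem_filter, decide_eq_true_iff]
  rw [h1, List.toFinset_card_of_nodup (hnd.filter _)]
  have h2 : ((l.map Prod.fst).filter (fun g => g ∈ crossing ends X)).length =
      l.countP (fun p => decide (p.1 ∈ crossing ends X)) := by
    rw [← List.countP_eq_length_filter, List.countP_map]
    rfl
  rw [h2]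
  exact hpar

lemma exists_second_in_cycle_cut {C U : Finset ε} {f : ε} (hC : IsCyc ends C)
    (hU : IsCut ends U) (hfC : f ∈ C) (hfU : f ∈ U) : ∃ g, g ∈ C ∧ g ∈ U ∧ g ≠ f := by
  have heven := cycle_cut_even ends hC hU
  have hmem : f ∈ C ∩ U := Finset.mem_inter.2 ⟨hfC, hfU⟩
  have hpos : 0 < (C ∩ U).card := Finset.card_pos.2 ⟨f, hmem⟩
  have h2 : 1 < (C ∩ U).card := by
    rcases heven with ⟨k, hk⟩
    omega
  obtain ⟨a, ha, b, hb, hab⟩ := Finset.one_lt_card.1 h2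
  by_cases haf : a = f
  · subst haf
    obtain ⟨hbC, hbU⟩ := Finset.mem_inter.1 hb
    exact ⟨b, hbC, hbU, fun h => hab h.symm⟩
  · obtain ⟨haC, haU⟩ := Finset.mem_inter.1 ha
    exact ⟨a, haC, haU, haf⟩

/-! ### Fundamental cuts and exchange -/

lemma reach_stays_in_comp {S : Finset ε} {r a b : V} (ha : a ∈ comp ends S r)
    (h : Reach ends S a b) : b ∈ comp ends S r := by
  rw [mem_comp] at ha ⊢
  exact ha.trans h

lemma fund_cut {F : Finset ε} {f : ε} (hF : Forest ends F) (hf : f ∈ F) :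
    IsCut ends (crossing ends (comp ends (F.erase f) (ends f).1)) ∧
    crossing ends (comp ends (F.erase f) (ends f).1) ⊆ insert f (Finset.univ \ F) ∧
    f ∈ crossing ends (comp ends (F.erase f) (ends f).1) := by
  set X := comp ends (F.erase f) (ends f).1 with hX
  have hfe : f ∉ F.erase f := Finset.notMem_erase f F
  have hnr : ¬ Reach ends (F.erase f) (ends f).1 (ends f).2 := by
    intro hr
    obtain ⟨C, hcyc, hsub, _⟩ := cycle_of_reach ends hfe hr
    rw [Finset.insert_erase hf] at hsub
    exact hF C hsub hcyc
  have hfXmem : f ∈ crossing ends X := by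
    simp only [crossing, Finset.mem_filter, Finset.mem_univ, true_and]
    left
    refine ⟨self_mem_comp ends, fun hcon => hnr ((mem_comp ends).1 hcon)⟩
  refine ⟨⟨⟨f, hfXmem⟩, X, rfl⟩, ?_, hfXmem⟩
  intro g hg
  by_cases hgf : g = f
  · subst hgf; exact Finset.mem_insert_self g _
  · refine Finset.mem_insert_of_mem (Finset.mem_sdiff.2 ⟨Finset.mem_univ g, fun hgF => ?_⟩)
    have hgerase : g ∈ F.erase f := Finset.mem_erase.2 ⟨hgf, hgF⟩
    have hreach := reach_edge ends hgerase
    simp only [crossing, Finset.mem_filter, Finset.mem_univ, true_and] at hg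
    rcases hg with ⟨h1, h2⟩ | ⟨h1, h2⟩
    · exact h2 (reach_stays_in_comp ends h1 hreach)
    · exact h1 (reach_stays_in_comp ends h2 (reach_symm ends hreach))

lemma exchange {F : Finset ε} {f g : ε} (hF : MaxForest ends F) (hf : f ∈ F)
    (hg : g ∈ crossing ends (comp ends (F.erase f) (ends f).1)) (hgf : g ≠ f) :
    MaxForest ends (insert g (F.erase f)) := by
  set X := comp ends (F.erase f) (ends f).1 with hX
  have hcut := fund_cut ends hF.1 hf
  have hgF : g ∉ F := by
    have := hcut.2.1 hg
    rcases Finset.mem_insert.1 this with h | h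
    · exact absurd h hgf
    · exact (Finset.mem_sdiff.1 h).2
  have hgerase : g ∉ F.erase f := fun h => hgF (Finset.mem_of_mem_erase h)
  simp only [crossing, Finset.mem_filter, Finset.mem_univ, true_and] at hg
  have hnr : ¬ Reach ends (F.erase f) (ends g).1 (ends g).2 := by
    intro hr
    rcases hg with ⟨h1, h2⟩ | ⟨h1, h2⟩
    · exact h2 (reach_stays_in_comp ends h1 hr)
    · exact h1 (reach_stays_in_comp ends h2 (reach_symm ends hr))
  have hforest : Forest ends (insert g (F.erase f)) :=
    forest_insert ends (forest_subset ends hF.1 (Finset.erase_subset _ _)) hgerase hnr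
  rw [maxForest_iff]
  refine ⟨hforest, ?_⟩
  have hsub : F.erase f ⊆ insert g (F.erase f) := Finset.subset_insert _ _
  have hedge_g : Reach ends (insert g (F.erase f)) (ends g).1 (ends g).2 :=
    reach_edge ends (Finset.mem_insert_self _ _)
  have hkey : Reach ends (insert g (F.erase f)) (ends f).1 (ends f).2 := by
    have hgreach : Reach ends F (ends g).1 (ends g).2 := ((maxForest_iff ends).1 hF).2 g
    have hFeq : F = insert f (F.erase f) := (Finset.insert_erase hf).symm
    rw [hFeq] at hgreach
    rw [reach_insert] at hgreach
    rcases hgreach with h1 | ⟨h1, h2⟩ | ⟨h1, h2⟩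
    · exact absurd h1 hnr
    · exact ((reach_mono ends hsub (reach_symm ends h1)).trans hedge_g).trans
        (reach_mono ends hsub (reach_symm ends h2))
    · exact ((reach_mono ends hsub h2).trans (reach_symm ends hedge_g)).trans
        (reach_mono ends hsub h1)
  have hreachF : ∀ h ∈ F, Reach ends (insert g (F.erase f)) (ends h).1 (ends h).2 := by
    intro h hhF
    by_cases hhf : h = f
    · exact hhf ▸ hkey
    · exact reach_edge ends (hsub (Finset.mem_erase.2 ⟨hhf, hhF⟩))
  intro e
  exact reach_le_of_edges ends hreachF (((maxForest_iff ends).1 hF).2 e)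

lemma forest_empty : Forest ends (∅ : Finset ε) := by
  intro C hC hcyc
  obtain ⟨n, f, d, hpos, _, hS, _⟩ := hcyc
  have h1 : f 0 ∈ C := by rw [hS]; exact Finset.mem_image.2 ⟨0, by simpa using hpos, rfl⟩
  have h2 := hC h1
  simp at h2

lemma exists_min_forest (ρ : ε → ℕ) (hinj : Function.Injective ρ) :
    ∃ F, MaxForest ends F ∧ ∀ f ∈ F, ∀ g ∈ crossing ends (comp ends (F.erase f) (ends f).1),
      g ≠ f → ρ f < ρ g := by
  classical
  set K := Finset.univ.sup ρ with hK
  have hle : ∀ e : ε, ρ e ≤ K := fun e => Finset.le_sup (Finset.mem_univ e)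
  set W : Finset ε → ℕ := fun T => ∑ e ∈ T, 2 ^ (K - ρ e) with hW
  obtain ⟨F₀, hF₀, _⟩ := exists_maxForest ends (forest_empty ends)
  obtain ⟨F, hFmem, hFmax⟩ := Finset.exists_max_image
    (Finset.univ.powerset.filter (MaxForest ends)) W ⟨F₀, by simp [hF₀]⟩
  simp only [Finset.mem_filter, Finset.mem_powerset] at hFmem
  have hF := hFmem.2
  refine ⟨F, hF, ?_⟩
  intro f hf g hg hgf
  by_contra hcon
  push_neg at hcon
  have hne : ρ g ≠ ρ f := fun h => hgf (hinj h)
  have hlt : ρ g < ρ f := lt_of_le_of_ne hcon hne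
  have hex := exchange ends hF hf hg hgf
  have hgF : g ∉ F := by
    have h1 := (fund_cut ends hF.1 hf).2.1 hg
    rcases Finset.mem_insert.1 h1 with h | h
    · exact absurd h hgf
    · exact (Finset.mem_sdiff.1 h).2
  have hgerase : g ∉ F.erase f := fun h => hgF (Finset.mem_of_mem_erase h)
  have h1 : W (insert g (F.erase f)) = 2 ^ (K - ρ g) + ∑ e ∈ F.erase f, 2 ^ (K - ρ e) :=
    Finset.sum_insert hgerase
  have h2 : ∑ e ∈ F.erase f, 2 ^ (K - ρ e) + 2 ^ (K - ρ f) = W F :=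
    Finset.sum_erase_add F _ hf
  have h3 : W (insert g (F.erase f)) ≤ W F :=
    hFmax _ (by simp [hex])
  have h4 : 2 ^ (K - ρ f) < 2 ^ (K - ρ g) := by
    apply Nat.pow_lt_pow_right one_lt_two
    have := hle f
    omega
  omega

/-! ### Activities -/

variable (σ : ε → ℕ)

/-- The interval condition relating a subset `A` to a maximal forest `F`. -/
def Cond (F A : Finset ε) : Prop :=
  MaxForest ends F ∧ (∀ f ∈ F \ A, IntAct ends σ F f) ∧ (∀ k ∈ A \ F, ExtAct ends σ F k)

lemma cond_exists (hσ : Function.Injective σ) (A : Finset ε) : ∃ F, Cond ends σ F A := by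
  classical
  set K := Finset.univ.sup σ with hK
  have hle : ∀ e : ε, σ e ≤ K := fun e => Finset.le_sup (Finset.mem_univ e)
  set ρ : ε → ℕ := fun e => if e ∈ A then K - σ e else K + 1 + σ e with hρ
  have hρinj : Function.Injective ρ := by
    intro a b hab
    simp only [hρ] at hab
    by_cases ha : a ∈ A <;> by_cases hb : b ∈ A <;> simp only [ha, hb, if_pos, if_neg,
      if_true, if_false] at hab
    · have := hle a; have := hle b
      exact hσ (by omega)
    · have := hle a; omega
    · have := hle b; omega
    · exact hσ (by omega)
  have hAA : ∀ a b : ε, a ∈ A → b ∉ A → ρ a < ρ b := by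
    intro a b ha hb
    simp only [hρ, if_pos ha, if_neg hb]
    have := hle a; omega
  have hin : ∀ a b : ε, a ∈ A → b ∈ A → ρ a < ρ b → σ b < σ a := by
    intro a b ha hb h
    simp only [hρ, if_pos ha, if_pos hb] at h
    have := hle a; have := hle b; omega
  have hout : ∀ a b : ε, a ∉ A → b ∉ A → ρ a < ρ b → σ a < σ b := by
    intro a b ha hb h
    simp only [hρ, if_neg ha, if_neg hb] at h
    omega
  obtain ⟨F, hF, hmin⟩ := exists_min_forest ends ρ hρinj
  refine ⟨F, hF, ?_, ?_⟩
  · -- internal activity for f ∈ F \ A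
    intro f hf
    obtain ⟨hfF, hfA⟩ := Finset.mem_sdiff.1 hf
    obtain ⟨hcut, hsub, hfU⟩ := fund_cut ends hF.1 hfF
    refine ⟨hfF, _, hcut, hsub, hfU, ?_⟩
    intro g hg
    by_cases hgf : g = f
    · exact hgf ▸ le_rfl
    · have h1 := hmin f hfF g hg hgf
      have hgA : g ∉ A := by
        intro hgA
        exact absurd (hAA g f hgA hfA) (by omega)
      exact le_of_lt (hout f g hfA hgA h1)
  · -- external activity for k ∈ A \ F
    intro k hk
    obtain ⟨hkA, hkF⟩ := Finset.mem_sdiff.1 hk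
    obtain ⟨C, hcyc, hsub, hkC⟩ := fund_cycle ends hF hkF
    refine ⟨hkF, C, hcyc, hsub, hkC, ?_⟩
    intro e heC
    by_cases hek : e = k
    · exact hek ▸ le_rfl
    · have heF : e ∈ F := by
        rcases Finset.mem_insert.1 (hsub heC) with rfl | h
        · exact absurd rfl hek
        · exact h
      obtain ⟨hcut, hsubU, heU⟩ := fund_cut ends hF.1 heF
      obtain ⟨h, hhC, hhU, hhe⟩ := exists_second_in_cycle_cut ends hcyc hcut heC heU
      have hhk : h = k := by
        by_contra hhk
        have h1 := hsubU hhU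
        rcases Finset.mem_insert.1 h1 with rfl | h1
        · exact hhe rfl
        · have h2 := (Finset.mem_sdiff.1 h1).2
          rcases Finset.mem_insert.1 (hsub hhC) with rfl | h3
          · exact hhk rfl
          · exact h2 h3
      subst hhk
      have h1 := hmin e heF h hhU (fun hc => hek hc.symm)
      have heA : e ∈ A := by
        by_contra heA
        exact absurd (hAA h e hkA heA) (by omega)
      exact le_of_lt (hin e h heA hkA h1)

/-! ### Uniqueness of the interval forest -/

def rho (σ : ε → ℕ) (A : Finset ε) : ε → ℕ := fun e =>
  if e ∈ A then (Finset.univ.sup σ) - σ e else (Finset.univ.sup σ) + 1 + σ e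

lemma sup_le' : ∀ e : ε, σ e ≤ Finset.univ.sup σ := fun e => Finset.le_sup (Finset.mem_univ e)

lemma rho_lt_cross {A : Finset ε} {a b : ε} (ha : a ∈ A) (hb : b ∉ A) :
    rho σ A a < rho σ A b := by
  simp only [rho, if_pos ha, if_neg hb]
  have := sup_le' σ a
  omega

lemma sigma_lt_of_rho_lt {A : Finset ε} {a b : ε} (ha : a ∈ A) (hb : b ∈ A)
    (h : rho σ A a < rho σ A b) : σ b < σ a := by
  simp only [rho, if_pos ha, if_pos hb] at h
  have := sup_le' σ a
  have := sup_le' σ b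
  omega

lemma rho_inj (hσ : Function.Injective σ) {A : Finset ε} : Function.Injective (rho σ A) := by
  intro a b hab
  simp only [rho] at hab
  have h1 := sup_le' σ a
  have h2 := sup_le' σ b
  by_cases ha : a ∈ A <;> by_cases hb : b ∈ A <;>
    simp only [ha, hb, if_true, if_false, if_pos, if_neg, not_false_iff] at hab
  · exact hσ (by omega)
  · omega
  · omega
  · exact hσ (by omega)

lemma cond_unique_aux (hσ : Function.Injective σ) {A F F' : Finset ε}
    (h : Cond ends σ F A) (h' : Cond ends σ F' A) {e : ε}
    (heD : e ∈ F \ F')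
    (hemin : ∀ g ∈ (F \ F') ∪ (F' \ F), rho σ A e ≤ rho σ A g) : False := by
  obtain ⟨heF, heF'⟩ := Finset.mem_sdiff.1 heD
  by_cases heA : e ∈ A
  · have hext := h'.2.2 e (Finset.mem_sdiff.2 ⟨heA, heF'⟩)
    obtain ⟨_, C, hcyc, hsub, heC, hminC⟩ := hext
    obtain ⟨hcut, hsubU, heU⟩ := fund_cut ends h.1.1 heF
    obtain ⟨g, hgC, hgU, hge⟩ := exists_second_in_cycle_cut ends hcyc hcut heC heU
    have hgF' : g ∈ F' := by
      rcases Finset.mem_insert.1 (hsub hgC) with rfl | hh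
      · exact absurd rfl hge
      · exact hh
    have hgF : g ∉ F := by
      rcases Finset.mem_insert.1 (hsubU hgU) with rfl | hh
      · exact absurd rfl hge
      · exact (Finset.mem_sdiff.1 hh).2
    have hρ : rho σ A e ≤ rho σ A g :=
      hemin g (Finset.mem_union_right _ (Finset.mem_sdiff.2 ⟨hgF', hgF⟩))
    have hσle : σ e ≤ σ g := hminC g hgC
    by_cases hgA : g ∈ A
    · have hlt : rho σ A e < rho σ A g :=
        lt_of_le_of_ne hρ (fun hh => hge (rho_inj σ hσ hh).symm)
      have := sigma_lt_of_rho_lt σ heA hgA hlt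
      omega
    · have hint := h'.2.1 g (Finset.mem_sdiff.2 ⟨hgF', hgA⟩)
      obtain ⟨_, U', hcut', hsub', hgU', hminU'⟩ := hint
      obtain ⟨x, hxC, hxU', hxg⟩ := exists_second_in_cycle_cut ends hcyc hcut' hgC hgU'
      have hxe : x = e := by
        by_contra hxe
        have h1 : x ∉ F' := by
          rcases Finset.mem_insert.1 (hsub' hxU') with rfl | hh
          · exact absurd rfl hxg
          · exact (Finset.mem_sdiff.1 hh).2
        rcases Finset.mem_insert.1 (hsub hxC) with rfl | hh
        · exact hxe rfl
        · exact h1 hh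
      subst hxe
      have h2 : σ g ≤ σ x := hminU' x hxU'
      exact hge (hσ (le_antisymm h2 hσle))
  · have hint := h.2.1 e (Finset.mem_sdiff.2 ⟨heF, heA⟩)
    obtain ⟨_, U, hcutU, hsubU, heU, hminU⟩ := hint
    obtain ⟨C, hcyc, hsub, heC⟩ := fund_cycle ends h'.1 heF'
    obtain ⟨g, hgC, hgU, hge⟩ := exists_second_in_cycle_cut ends hcyc hcutU heC heU
    have hgF' : g ∈ F' := by
      rcases Finset.mem_insert.1 (hsub hgC) with rfl | hh
      · exact absurd rfl hge
      · exact hh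
    have hgF : g ∉ F := by
      rcases Finset.mem_insert.1 (hsubU hgU) with rfl | hh
      · exact absurd rfl hge
      · exact (Finset.mem_sdiff.1 hh).2
    have hρ : rho σ A e ≤ rho σ A g :=
      hemin g (Finset.mem_union_right _ (Finset.mem_sdiff.2 ⟨hgF', hgF⟩))
    have hσle : σ e ≤ σ g := hminU g hgU
    by_cases hgA : g ∈ A
    · exact absurd (rho_lt_cross σ hgA heA) (by omega)
    · have hint' := h'.2.1 g (Finset.mem_sdiff.2 ⟨hgF', hgA⟩)
      obtain ⟨_, U', hcut', hsub', hgU', hminU'⟩ := hint'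
      obtain ⟨x, hxC, hxU', hxg⟩ := exists_second_in_cycle_cut ends hcyc hcut' hgC hgU'
      have hxe : x = e := by
        by_contra hxe
        have h1 : x ∉ F' := by
          rcases Finset.mem_insert.1 (hsub' hxU') with rfl | hh
          · exact absurd rfl hxg
          · exact (Finset.mem_sdiff.1 hh).2
        rcases Finset.mem_insert.1 (hsub hxC) with rfl | hh
        · exact hxe rfl
        · exact h1 hh
      subst hxe
      have h2 : σ g ≤ σ x := hminU' x hxU'
      exact hge (hσ (le_antisymm h2 hσle))

lemma cond_unique (hσ : Function.Injective σ) {A F F' : Finset ε}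
    (h : Cond ends σ F A) (h' : Cond ends σ F' A) : F = F' := by
  by_contra hne
  have hDne : ((F \ F') ∪ (F' \ F)).Nonempty := by
    rw [Finset.nonempty_iff_ne_empty]
    intro hD
    rw [Finset.union_eq_empty] at hD
    exact hne (Finset.Subset.antisymm (fun a ha => by_contra fun ha' =>
      Finset.notMem_empty a (hD.1 ▸ Finset.mem_sdiff.2 ⟨ha, ha'⟩))
      (fun a ha => by_contra fun ha' =>
      Finset.notMem_empty a (hD.2 ▸ Finset.mem_sdiff.2 ⟨ha, ha'⟩)))
  obtain ⟨e, heD, hemin⟩ := Finset.exists_min_image _ (rho σ A) hDne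
  rcases Finset.mem_union.1 heD with he | he
  · exact cond_unique_aux ends σ hσ h h' he hemin
  · refine cond_unique_aux ends σ hσ h' h he (fun g hg => hemin g ?_)
    rcases Finset.mem_union.1 hg with hh | hh
    · exact Finset.mem_union_right _ hh
    · exact Finset.mem_union_left _ hh

/-! ### Rank over an interval, and the final assembly -/

lemma grank_univ_eq {F : Finset ε} (hF : MaxForest ends F) :
    grank ends (Finset.univ : Finset ε) = F.card :=
  grank_eq_of_basis ends (Finset.subset_univ F) hF.1
    (fun g _ => ((maxForest_iff ends).1 hF).2 g)

lemma interval_grank {F A : Finset ε} (hσ : Function.Injective σ) (hC : Cond ends σ F A) :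
    grank ends A = (F ∩ A).card := by
  refine grank_eq_of_basis ends Finset.inter_subset_right
    (forest_subset ends hC.1.1 Finset.inter_subset_left) ?_
  intro g hg
  by_cases hgF : g ∈ F
  · exact reach_edge ends (Finset.mem_inter.2 ⟨hgF, hg⟩)
  · obtain ⟨_, C, hcyc, hsub, hgC, hminC⟩ := hC.2.2 g (Finset.mem_sdiff.2 ⟨hg, hgF⟩)
    have hCB : C.erase g ⊆ F ∩ A := by
      intro a ha
      obtain ⟨hag, haC⟩ := Finset.mem_erase.1 ha
      have haF : a ∈ F := by
        rcases Finset.mem_insert.1 (hsub haC) with rfl | h1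
        · exact absurd rfl hag
        · exact h1
      refine Finset.mem_inter.2 ⟨haF, ?_⟩
      by_contra haA
      obtain ⟨_, U, hcutU, hsubU, haU, hminU⟩ := hC.2.1 a (Finset.mem_sdiff.2 ⟨haF, haA⟩)
      obtain ⟨x, hxC, hxU, hxa⟩ := exists_second_in_cycle_cut ends hcyc hcutU haC haU
      have hxg : x = g := by
        by_contra hxg
        have hh1 : x ∉ F := by
          rcases Finset.mem_insert.1 (hsubU hxU) with rfl | hh2
          · exact absurd rfl hxa
          · exact (Finset.mem_sdiff.1 hh2).2
        rcases Finset.mem_insert.1 (hsub hxC) with rfl | hh3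
        · exact hxg rfl
        · exact hh1 hh3
      subst hxg
      have h2 : σ a ≤ σ x := hminU x hxU
      have h3 : σ x ≤ σ a := hminC a haC
      exact hag (hσ (le_antisymm h2 h3))
    exact reach_mono ends hCB (reach_of_cycle ends hcyc hgC)

lemma sum_pow_powerset {R : Type*} [CommRing R] (s : Finset ε) (r : R) :
    ∑ t ∈ s.powerset, r ^ t.card = (r + 1) ^ s.card := by
  have h := Finset.prod_add (fun _ : ε => r) (fun _ : ε => (1 : R)) s
  rw [Finset.prod_const] at h
  rw [h]
  apply Finset.sum_congr rfl
  intro t _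
  rw [Finset.prod_const, Finset.prod_const, one_pow, mul_one]

theorem main_identity (hσ : Function.Injective σ) (x y : ℤ) :
    ∑ F ∈ (Finset.univ : Finset ε).powerset.filter (MaxForest ends),
        x ^ (Finset.univ.filter (IntAct ends σ F)).card *
          y ^ (Finset.univ.filter (ExtAct ends σ F)).card =
      ∑ A ∈ (Finset.univ : Finset ε).powerset,
        (x - 1) ^ (grank ends Finset.univ - grank ends A) *
          (y - 1) ^ (A.card - grank ends A) := by
  classical
  set φ : Finset ε → Finset ε := fun A => (cond_exists ends σ hσ A).choose with hφdef
  have hφ : ∀ A, Cond ends σ (φ A) A := fun A => (cond_exists ends σ hσ A).choose_spec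
  have hmaps : ∀ A ∈ (Finset.univ : Finset ε).powerset, φ A ∈
      (Finset.univ : Finset ε).powerset.filter (MaxForest ends) := by
    intro A _
    simp only [Finset.mem_filter, Finset.mem_powerset]
    exact ⟨Finset.subset_univ _, (hφ A).1⟩
  rw [← Finset.sum_fiberwise_of_maps_to hmaps
    (fun A => (x - 1) ^ (grank ends Finset.univ - grank ends A) *
      (y - 1) ^ (A.card - grank ends A))]
  apply Finset.sum_congr rfl
  intro F hF
  simp only [Finset.mem_filter, Finset.mem_powerset] at hF
  have hFmax : MaxForest ends F := hF.2
  set I := Finset.univ.filter (IntAct ends σ F) with hI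
  set Ex := Finset.univ.filter (ExtAct ends σ F) with hEx
  have hIF : I ⊆ F := by
    intro f hf
    exact ((Finset.mem_filter.1 hf).2).1
  have hExF : ∀ k ∈ Ex, k ∉ F := by
    intro k hk
    exact ((Finset.mem_filter.1 hk).2).1
  have hfib : (Finset.univ : Finset ε).powerset.filter (fun A => φ A = F) =
      (Finset.univ : Finset ε).powerset.filter
        (fun A => (∀ f ∈ F \ A, IntAct ends σ F f) ∧ (∀ k ∈ A \ F, ExtAct ends σ F k)) := by
    ext A
    simp only [Finset.mem_filter, Finset.mem_powerset]
    constructor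
    · rintro ⟨hA, rfl⟩
      exact ⟨hA, (hφ A).2.1, (hφ A).2.2⟩
    · rintro ⟨hA, hcond⟩
      exact ⟨hA, cond_unique ends σ hσ (hφ A) ⟨hFmax, hcond.1, hcond.2⟩⟩
  rw [hfib]
  have hsum : ∑ A ∈ (Finset.univ : Finset ε).powerset.filter
        (fun A => (∀ f ∈ F \ A, IntAct ends σ F f) ∧ (∀ k ∈ A \ F, ExtAct ends σ F k)),
      (x - 1) ^ (grank ends Finset.univ - grank ends A) * (y - 1) ^ (A.card - grank ends A) =
      ∑ p ∈ I.powerset ×ˢ Ex.powerset, (x - 1) ^ p.1.card * (y - 1) ^ p.2.card := by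
    refine Finset.sum_nbij' (i := fun A => (F \ A, A \ F))
      (j := fun p => (F \ p.1) ∪ p.2) ?_ ?_ ?_ ?_ ?_
    · intro A hA
      simp only [Finset.mem_filter, Finset.mem_powerset] at hA
      simp only [Finset.mem_product, Finset.mem_powerset]
      constructor
      · intro f hf
        simp only [hI, Finset.mem_filter]
        exact ⟨Finset.mem_univ f, hA.2.1 f hf⟩
      · intro k hk
        simp only [hEx, Finset.mem_filter]
        exact ⟨Finset.mem_univ k, hA.2.2 k hk⟩
    · intro p hp
      simp only [Finset.mem_product, Finset.mem_powerset] at hp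
      obtain ⟨hJ, hK⟩ := hp
      have hJF : p.1 ⊆ F := hJ.trans hIF
      have hKF : ∀ k ∈ p.2, k ∉ F := fun k hk => hExF k (hK hk)
      have idJ : F \ ((F \ p.1) ∪ p.2) = p.1 := by
        ext a
        simp only [Finset.mem_sdiff, Finset.mem_union]
        constructor
        · rintro ⟨haF, hnot⟩
          by_contra haJ
          exact hnot (Or.inl ⟨haF, haJ⟩)
        · intro haJ
          refine ⟨hJF haJ, fun hor => ?_⟩
          rcases hor with ⟨_, h1⟩ | h1
          · exact h1 haJ
          · exact hKF a h1 (hJF haJ)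
      have idK : ((F \ p.1) ∪ p.2) \ F = p.2 := by
        ext a
        simp only [Finset.mem_sdiff, Finset.mem_union]
        constructor
        · rintro ⟨h1 | h1, h2⟩
          · exact absurd h1.1 h2
          · exact h1
        · intro ha
          exact ⟨Or.inr ha, hKF a ha⟩
      simp only [Finset.mem_filter, Finset.mem_powerset]
      refine ⟨Finset.subset_univ _, ?_, ?_⟩
      · rw [idJ]
        intro f hf
        exact (Finset.mem_filter.1 (hJ hf)).2
      · rw [idK]
        intro k hk
        exact (Finset.mem_filter.1 (hK hk)).2
    · intro A hA
      simp only
      ext a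
      simp only [Finset.mem_union, Finset.mem_sdiff]
      constructor
      · rintro (⟨haF, hnot⟩ | ⟨haA, _⟩)
        · by_contra haA
          exact hnot ⟨haF, haA⟩
        · exact haA
      · intro haA
        by_cases haF : a ∈ F
        · exact Or.inl ⟨haF, fun hc => hc.2 haA⟩
        · exact Or.inr ⟨haA, haF⟩
    · intro p hp
      simp only [Finset.mem_product, Finset.mem_powerset] at hp
      obtain ⟨hJ, hK⟩ := hp
      have hJF : p.1 ⊆ F := hJ.trans hIF
      have hKF : ∀ k ∈ p.2, k ∉ F := fun k hk => hExF k (hK hk)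
      have idJ : F \ ((F \ p.1) ∪ p.2) = p.1 := by
        ext a
        simp only [Finset.mem_sdiff, Finset.mem_union]
        constructor
        · rintro ⟨haF, hnot⟩
          by_contra haJ
          exact hnot (Or.inl ⟨haF, haJ⟩)
        · intro haJ
          refine ⟨hJF haJ, fun hor => ?_⟩
          rcases hor with ⟨_, h1⟩ | h1
          · exact h1 haJ
          · exact hKF a h1 (hJF haJ)
      have idK : ((F \ p.1) ∪ p.2) \ F = p.2 := by
        ext a
        simp only [Finset.mem_sdiff, Finset.mem_union]
        constructor
        · rintro ⟨h1 | h1, h2⟩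
          · exact absurd h1.1 h2
          · exact h1
        · intro ha
          exact ⟨Or.inr ha, hKF a ha⟩
      rw [idJ, idK]
    · intro A hA
      simp only [Finset.mem_filter, Finset.mem_powerset] at hA
      have hcond : Cond ends σ F A := ⟨hFmax, hA.2.1, hA.2.2⟩
      have h1 : grank ends (Finset.univ : Finset ε) = F.card := grank_univ_eq ends hFmax
      have h2 : grank ends A = (F ∩ A).card := interval_grank ends σ hσ hcond
      have h3 : (F ∩ A).card + (F \ A).card = F.card := Finset.card_inter_add_card_sdiff F A
      have h4 : (A ∩ F).card + (A \ F).card = A.card := Finset.card_inter_add_card_sdiff A F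
      have h5 : (A ∩ F) = (F ∩ A) := Finset.inter_comm A F
      simp only
      rw [h1, h2]
      congr 2
      · omega
      · rw [h5] at h4; omega
  rw [hsum, Finset.sum_product]
  have h6 : ∀ J : Finset ε, ∑ K ∈ Ex.powerset, (x - 1) ^ J.card * (y - 1) ^ K.card =
      (x - 1) ^ J.card * y ^ Ex.card := by
    intro J
    rw [← Finset.mul_sum, sum_pow_powerset]
    ring_nf
  rw [Finset.sum_congr rfl (fun J _ => h6 J), ← Finset.sum_mul, sum_pow_powerset]
  ring_nf

end Aux

/-- Tutte's spanning-forest activities expansion equals Whitney's corank-nullity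
expansion.  Since the right-hand side does not depend on the edge order `σ`, the
activities expansion is independent of the chosen total order on the edges. -/
theorem tutte_activities_expansion
    (ends : ε → V × V) (σ : ε → ℕ) (hσ : Function.Injective σ) (x y : ℤ) :
    ∑ F ∈ (Finset.univ : Finset ε).powerset.filter (MaxForest ends),
        x ^ (Finset.univ.filter (IntAct ends σ F)).card *
          y ^ (Finset.univ.filter (ExtAct ends σ F)).card =
      gTutte ends x y := by
  rw [gTutte]
  exact main_identity ends σ hσ x y

end TutteActivities
end
end

section
/- Given a basis B of a matroid M on a totally ordered ground set, there exists a unique cyclic flat F of M such that B∩F is a basis of the restriction M|F with no internally active elements, and B∖F is a basis of the contraction M/F with no externally active elements. -/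
noncomputable section
attribute [local instance] Classical.propDecidable

namespace TutteActivities

variable {α : Type*} [DecidableEq α]

/-- `ℬ` is the family of bases of a matroid on ground set `E`:
nonempty, contained in `E`, and satisfying the basis-exchange axiom. -/
def IsMatroidOn (E : Finset α) (ℬ : Finset (Finset α)) : Prop :=
  ℬ.Nonempty ∧ (∀ B ∈ ℬ, B ⊆ E) ∧
    ∀ B₁ ∈ ℬ, ∀ B₂ ∈ ℬ, ∀ e ∈ B₁ \ B₂, ∃ f ∈ B₂ \ B₁, insert f (B₁.erase e) ∈ ℬ

/-- A set is independent if it is contained in a basis. -/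
def Indep (ℬ : Finset (Finset α)) (S : Finset α) : Prop := ∃ B ∈ ℬ, S ⊆ B

/-- A circuit is a minimal dependent subset of the ground set. -/
def Circuit (E : Finset α) (ℬ : Finset (Finset α)) (C : Finset α) : Prop :=
  C ⊆ E ∧ ¬ Indep ℬ C ∧ ∀ D ⊂ C, Indep ℬ D

/-- A cocircuit is a minimal subset of the ground set meeting every basis. -/
def Cocircuit (E : Finset α) (ℬ : Finset (Finset α)) (C : Finset α) : Prop :=
  C ⊆ E ∧ (∀ B ∈ ℬ, (B ∩ C).Nonempty) ∧ ∀ D ⊂ C, ∃ B ∈ ℬ, B ∩ D = ∅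

/-- The rank of a set `A`: the largest size of the intersection of a basis with `A`. -/
def rank (ℬ : Finset (Finset α)) (A : Finset α) : ℕ := ℬ.sup fun B => (B ∩ A).card

/-- `e` is the minimum element of `C` with respect to the order given by labels `σ`. -/
def IsMinOf (σ : α → ℕ) (e : α) (C : Finset α) : Prop := e ∈ C ∧ ∀ g ∈ C, σ e ≤ σ g

/-- `f ∉ B` is externally active: `f` is the minimum of the fundamental circuit of `f`,
i.e. of a circuit contained in `B ∪ {f}`. -/
def ExtActive (E : Finset α) (ℬ : Finset (Finset α)) (σ : α → ℕ) (B : Finset α) (f : α) :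
    Prop :=
  f ∉ B ∧ ∃ C, Circuit E ℬ C ∧ C ⊆ insert f B ∧ IsMinOf σ f C

/-- `e ∈ B` is internally active: `e` is the minimum of the fundamental cocircuit of `e`,
i.e. of a cocircuit contained in `(E \ B) ∪ {e}`. -/
def IntActive (E : Finset α) (ℬ : Finset (Finset α)) (σ : α → ℕ) (B : Finset α) (e : α) :
    Prop :=
  e ∈ B ∧ ∃ C, Cocircuit E ℬ C ∧ C ⊆ insert e (E \ B) ∧ IsMinOf σ e C

/-- The set of externally active elements of a basis `B`. -/
def extSet (E : Finset α) (ℬ : Finset (Finset α)) (σ : α → ℕ) (B : Finset α) : Finset α :=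
  E.filter (ExtActive E ℬ σ B)

/-- The set of internally active elements of a basis `B`. -/
def intSet (E : Finset α) (ℬ : Finset (Finset α)) (σ : α → ℕ) (B : Finset α) : Finset α :=
  E.filter (IntActive E ℬ σ B)

/-- The Tutte polynomial via Whitney's corank-nullity expansion. -/
def tutte (E : Finset α) (ℬ : Finset (Finset α)) (x y : ℤ) : ℤ :=
  ∑ A ∈ E.powerset, (x - 1) ^ (rank ℬ E - rank ℬ A) * (y - 1) ^ (A.card - rank ℬ A)

/-- Bases of the restriction `M|F`: maximal independent subsets of `F`. -/
def restrBases (ℬ : Finset (Finset α)) (F : Finset α) : Finset (Finset α) :=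
  F.powerset.filter fun S => Indep ℬ S ∧ ∀ g ∈ F, g ∉ S → ¬ Indep ℬ (insert g S)

/-- Bases of the contraction `M/F`: sets `S ⊆ E \ F` such that `S ∪ J` is a basis of `M`
for some basis `J` of `M|F`. -/
def contrBases (E : Finset α) (ℬ : Finset (Finset α)) (F : Finset α) :
    Finset (Finset α) :=
  (E \ F).powerset.filter fun S => ∃ J ∈ restrBases ℬ F, S ∪ J ∈ ℬ

/-- A flat: a rank-closed subset of the ground set. -/
def Flat (E : Finset α) (ℬ : Finset (Finset α)) (F : Finset α) : Prop :=
  F ⊆ E ∧ ∀ e ∈ E \ F, rank ℬ (insert e F) ≠ rank ℬ F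

/-- A cyclic flat: a flat that is a union of circuits. -/
def CyclicFlat (E : Finset α) (ℬ : Finset (Finset α)) (F : Finset α) : Prop :=
  Flat E ℬ F ∧ ∀ e ∈ F, ∃ C, Circuit E ℬ C ∧ C ⊆ F ∧ e ∈ C

set_option linter.unusedSectionVars false
set_option linter.unusedVariables false

section Lemmas

variable {α : Type*} [DecidableEq α]

section Core
variable {E : Finset α} {ℬ : Finset (Finset α)}

lemma indep_mono {S T : Finset α} (hT : Indep ℬ T) (h : S ⊆ T) : Indep ℬ S :=
  let ⟨B, hB, hTB⟩ := hT; ⟨B, hB, h.trans hTB⟩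

lemma indep_of_mem {B : Finset α} (hB : B ∈ ℬ) : Indep ℬ B := ⟨B, hB, le_refl _⟩

lemma indep_empty (h : ℬ.Nonempty) : Indep ℬ ∅ :=
  let ⟨B, hB⟩ := h; ⟨B, hB, Finset.empty_subset _⟩

lemma indep_ground (hM : IsMatroidOn E ℬ) {S : Finset α} (h : Indep ℬ S) : S ⊆ E :=
  let ⟨B, hB, hSB⟩ := h; hSB.trans (hM.2.1 B hB)

lemma basis_card_eq (hM : IsMatroidOn E ℬ) {B₁ B₂ : Finset α}
    (h1 : B₁ ∈ ℬ) (h2 : B₂ ∈ ℬ) : B₁.card = B₂.card := by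
  suffices H : ∀ n (B₁ B₂ : Finset α), B₁ ∈ ℬ → B₂ ∈ ℬ → (B₁ \ B₂).card = n →
      B₁.card = B₂.card from H _ B₁ B₂ h1 h2 rfl
  intro n
  induction n with
  | zero =>
    intro B₁ B₂ h1 h2 hc
    have hsub : B₁ ⊆ B₂ := by
      rw [← Finset.sdiff_eq_empty_iff_subset]
      exact Finset.card_eq_zero.mp hc
    have hsub2 : B₂ ⊆ B₁ := by
      by_contra hns
      obtain ⟨g, hg⟩ := Finset.not_subset.mp hns
      obtain ⟨f, hf, -⟩ := hM.2.2 B₂ h2 B₁ h1 g (Finset.mem_sdiff.mpr ⟨hg.1, hg.2⟩)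
      rw [Finset.mem_sdiff] at hf
      exact hf.2 (hsub hf.1)
    exact le_antisymm (Finset.card_le_card hsub) (Finset.card_le_card hsub2)
  | succ n ih =>
    intro B₁ B₂ h1 h2 hc
    have hne : (B₁ \ B₂).Nonempty := by
      rw [← Finset.card_pos, hc]; omega
    obtain ⟨e, he⟩ := hne
    obtain ⟨f, hf, hB'⟩ := hM.2.2 B₁ h1 B₂ h2 e he
    rw [Finset.mem_sdiff] at he hf
    have hfe : f ≠ e := fun h => hf.2 (h ▸ he.1)
    have hcard : (insert f (B₁.erase e)).card = B₁.card := by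
      rw [Finset.card_insert_of_notMem (fun h => hf.2 (Finset.mem_of_mem_erase h)),
        Finset.card_erase_of_mem he.1]
      have : 0 < B₁.card := Finset.card_pos.mpr ⟨e, he.1⟩
      omega
    have hdiff : (insert f (B₁.erase e)) \ B₂ = (B₁ \ B₂).erase e := by
      ext x
      simp only [Finset.mem_sdiff, Finset.mem_insert, Finset.mem_erase]
      constructor
      · rintro ⟨hx1 | hx1, hx2⟩
        · exact absurd (hx1 ▸ hf.1) hx2
        · exact ⟨hx1.1, hx1.2, hx2⟩
      · rintro ⟨hx1, hx2, hx3⟩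
        exact ⟨Or.inr ⟨hx1, hx2⟩, hx3⟩
    have := ih (insert f (B₁.erase e)) B₂ hB' h2 (by
      rw [hdiff, Finset.card_erase_of_mem (Finset.mem_sdiff.mpr he), hc]; omega)
    omega

lemma exists_basis_between (hM : IsMatroidOn E ℬ) {S B₁ B₂ : Finset α}
    (h1 : B₁ ∈ ℬ) (h2 : B₂ ∈ ℬ) (hS : S ⊆ B₁) :
    ∃ B ∈ ℬ, S ⊆ B ∧ B ⊆ S ∪ B₂ := by
  suffices H : ∀ n (B₁ : Finset α), B₁ ∈ ℬ → S ⊆ B₁ → (B₁ \ (B₂ ∪ S)).card = n →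
      ∃ B ∈ ℬ, S ⊆ B ∧ B ⊆ S ∪ B₂ from H _ B₁ h1 hS rfl
  intro n
  induction n with
  | zero =>
    intro B₁ h1 hS hc
    refine ⟨B₁, h1, hS, ?_⟩
    intro x hx
    by_contra hnx
    simp only [Finset.mem_union, not_or] at hnx
    have : x ∈ B₁ \ (B₂ ∪ S) := by
      simp only [Finset.mem_sdiff, Finset.mem_union]; tauto
    rw [Finset.card_eq_zero] at hc
    simp [hc] at this
  | succ n ih =>
    intro B₁ h1 hS hc
    have hne : (B₁ \ (B₂ ∪ S)).Nonempty := by rw [← Finset.card_pos, hc]; omega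
    obtain ⟨e, he⟩ := hne
    rw [Finset.mem_sdiff, Finset.mem_union, not_or] at he
    obtain ⟨f, hf, hB'⟩ := hM.2.2 B₁ h1 B₂ h2 e (Finset.mem_sdiff.mpr ⟨he.1, he.2.1⟩)
    rw [Finset.mem_sdiff] at hf
    have hSB' : S ⊆ insert f (B₁.erase e) := by
      intro x hx
      exact Finset.mem_insert_of_mem (Finset.mem_erase.mpr
        ⟨fun h => he.2.2 (h ▸ hx), hS hx⟩)
    refine ih (insert f (B₁.erase e)) hB' hSB' ?_
    have hdiff : (insert f (B₁.erase e)) \ (B₂ ∪ S) = (B₁ \ (B₂ ∪ S)).erase e := by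
      ext x
      simp only [Finset.mem_sdiff, Finset.mem_insert, Finset.mem_erase, Finset.mem_union,
        not_or]
      constructor
      · rintro ⟨hx1 | hx1, hx2, hx3⟩
        · exact absurd (hx1 ▸ hf.1) hx2
        · exact ⟨hx1.1, hx1.2, hx2, hx3⟩
      · rintro ⟨hx1, hx2, hx3, hx4⟩
        exact ⟨Or.inr ⟨hx1, hx2⟩, hx3, hx4⟩
    have he' : e ∈ B₁ \ (B₂ ∪ S) := by
      simp only [Finset.mem_sdiff, Finset.mem_union]; tauto
    rw [hdiff, Finset.card_erase_of_mem he', hc]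
    omega

lemma indep_augment (hM : IsMatroidOn E ℬ) {S T : Finset α}
    (hS : Indep ℬ S) (hT : Indep ℬ T) (h : S.card < T.card) :
    ∃ x ∈ T, x ∉ S ∧ Indep ℬ (insert x S) := by
  obtain ⟨BS, hBS, hSBS⟩ := hS
  obtain ⟨BT, hBT, hTBT⟩ := hT
  obtain ⟨B, hB, hSB, hBsub⟩ := exists_basis_between hM hBS hBT hSBS
  -- B ⊆ S ∪ BT, S ⊆ B, |B| = |BT|
  have hcard : B.card = BT.card := basis_card_eq hM hB hBT
  -- there is x ∈ B ∩ T \ S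
  by_contra hcon
  push_neg at hcon
  -- then B ∩ T ⊆ S, so B \ S ⊆ BT \ T
  have hBT' : B \ S ⊆ BT \ T := by
    intro x hx
    rw [Finset.mem_sdiff] at hx ⊢
    have hxBT : x ∈ BT := by
      have := hBsub hx.1
      rw [Finset.mem_union] at this
      tauto
    refine ⟨hxBT, fun hxT => ?_⟩
    exact hx.2 (by
      by_contra hxS
      exact hxS (by
        exfalso
        have := hcon x hxT
        exact (this hx.2) (indep_mono (indep_of_mem hB) (Finset.insert_subset hx.1 hSB))))
  have h1 : B.card - S.card ≤ BT.card - T.card := by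
    have e1 : (B \ S).card = B.card - S.card := by
      rw [Finset.card_sdiff_of_subset hSB]
    have e2 : (BT \ T).card = BT.card - T.card := by
      rw [Finset.card_sdiff_of_subset hTBT]
    rw [← e1, ← e2]
    exact Finset.card_le_card hBT'
  have hSle : S.card ≤ B.card := Finset.card_le_card hSB
  have hTle : T.card ≤ BT.card := Finset.card_le_card hTBT
  omega

-- rank lemmas
lemma rank_mono {A A' : Finset α} (h : A ⊆ A') : rank ℬ A ≤ rank ℬ A' :=
  Finset.sup_le fun B hB => Finset.le_sup_of_le hB
    (Finset.card_le_card (Finset.inter_subset_inter (le_refl _) h))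

lemma rank_le_card {A : Finset α} : rank ℬ A ≤ A.card :=
  Finset.sup_le fun _ _ => Finset.card_le_card (Finset.inter_subset_right)

lemma le_rank_of_indep {S A : Finset α} (hS : Indep ℬ S) (h : S ⊆ A) :
    S.card ≤ rank ℬ A := by
  obtain ⟨B, hB, hSB⟩ := hS
  calc S.card ≤ (B ∩ A).card := Finset.card_le_card (Finset.subset_inter hSB h)
    _ ≤ rank ℬ A := by rw [rank]; exact Finset.le_sup (f := fun B => (B ∩ A).card) hB

lemma exists_max_indep (hne : ℬ.Nonempty) (A : Finset α) :
    ∃ S, Indep ℬ S ∧ S ⊆ A ∧ S.card = rank ℬ A := by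
  obtain ⟨B, hB, hBeq⟩ := Finset.exists_mem_eq_sup ℬ hne (fun B => (B ∩ A).card)
  exact ⟨B ∩ A, indep_mono (indep_of_mem hB) Finset.inter_subset_left,
    Finset.inter_subset_right, hBeq.symm⟩

lemma indep_of_rank_eq {A : Finset α} (hne : ℬ.Nonempty) (h : rank ℬ A = A.card) :
    Indep ℬ A := by
  obtain ⟨S, hS, hSA, hcard⟩ := exists_max_indep hne A
  have : S = A := Finset.eq_of_subset_of_card_le hSA (by omega)
  exact this ▸ hS

lemma rank_eq_card_of_indep {A : Finset α} (h : Indep ℬ A) : rank ℬ A = A.card :=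
  le_antisymm rank_le_card (le_rank_of_indep h (le_refl _))

lemma rank_le_basis_card (hM : IsMatroidOn E ℬ) {B : Finset α} (hB : B ∈ ℬ)
    (A : Finset α) : rank ℬ A ≤ B.card :=
  Finset.sup_le fun B' hB' => le_trans
    (Finset.card_le_card Finset.inter_subset_left) (le_of_eq (basis_card_eq hM hB' hB))

lemma rank_insert_le {A : Finset α} (x : α) :
    rank ℬ (insert x A) ≤ rank ℬ A + 1 := by
  refine Finset.sup_le fun B hB => ?_
  calc (B ∩ insert x A).card ≤ (insert x (B ∩ A)).card :=
        Finset.card_le_card (by intro y hy; rw [Finset.mem_inter, Finset.mem_insert] at hy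
                                rw [Finset.mem_insert, Finset.mem_inter]; tauto)
    _ ≤ (B ∩ A).card + 1 := Finset.card_insert_le _ _
    _ ≤ rank ℬ A + 1 := by
        have h : (B ∩ A).card ≤ rank ℬ A := by
          rw [rank]; exact Finset.le_sup (f := fun B => (B ∩ A).card) hB
        omega

lemma exists_indep_superset (hM : IsMatroidOn E ℬ) {S A : Finset α}
    (hS : Indep ℬ S) (hSA : S ⊆ A) :
    ∃ T, Indep ℬ T ∧ S ⊆ T ∧ T ⊆ A ∧ T.card = rank ℬ A := by
  suffices H : ∀ n (S : Finset α), Indep ℬ S → S ⊆ A → rank ℬ A - S.card = n →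
      ∃ T, Indep ℬ T ∧ S ⊆ T ∧ T ⊆ A ∧ T.card = rank ℬ A from H _ S hS hSA rfl
  intro n
  induction n with
  | zero =>
    intro S hS hSA hc
    have := le_rank_of_indep hS hSA
    exact ⟨S, hS, le_refl _, hSA, by omega⟩
  | succ n ih =>
    intro S hS hSA hc
    obtain ⟨T₀, hT₀, hT₀A, hT₀card⟩ := exists_max_indep hM.1 A
    have hlt : S.card < T₀.card := by omega
    obtain ⟨x, hxT, hxS, hxind⟩ := indep_augment hM hS hT₀ hlt
    obtain ⟨T, h1, h2, h3, h4⟩ := ih (insert x S) hxind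
      (Finset.insert_subset (hT₀A hxT) hSA)
      (by rw [Finset.card_insert_of_notMem hxS]; omega)
    exact ⟨T, h1, (Finset.subset_insert _ _).trans h2, h3, h4⟩

-- closure
def clo (E : Finset α) (ℬ : Finset (Finset α)) (A : Finset α) : Finset α :=
  A ∪ E.filter fun x => rank ℬ (insert x A) = rank ℬ A

lemma subset_clo {A : Finset α} : A ⊆ clo E ℬ A := Finset.subset_union_left

lemma clo_subset_ground {A : Finset α} (hA : A ⊆ E) : clo E ℬ A ⊆ E :=
  Finset.union_subset hA (Finset.filter_subset _ _)

lemma mem_clo_of_rank (hxE : x ∈ E) (h : rank ℬ (insert x A) = rank ℬ A) :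
    x ∈ clo E ℬ A :=
  Finset.mem_union_right _ (Finset.mem_filter.mpr ⟨hxE, h⟩)

lemma rank_insert_eq_of_mem_clo {A : Finset α} {x : α} (hx : x ∈ clo E ℬ A) :
    rank ℬ (insert x A) = rank ℬ A := by
  rw [clo, Finset.mem_union, Finset.mem_filter] at hx
  rcases hx with hx | hx
  · rw [Finset.insert_eq_self.mpr hx]
  · exact hx.2

lemma rank_insert_succ_of_notMem_clo {A : Finset α} {x : α} (hxE : x ∈ E)
    (hx : x ∉ clo E ℬ A) : rank ℬ (insert x A) = rank ℬ A + 1 := by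
  have h1 : rank ℬ (insert x A) ≤ rank ℬ A + 1 := rank_insert_le x
  have h2 : rank ℬ A ≤ rank ℬ (insert x A) := rank_mono (Finset.subset_insert _ _)
  have h3 : rank ℬ (insert x A) ≠ rank ℬ A := fun h => hx (mem_clo_of_rank hxE h)
  omega

lemma insert_dep_of_mem_clo (hM : IsMatroidOn E ℬ) {A S : Finset α} {x : α}
    (hS : Indep ℬ S) (hSA : S ⊆ A) (hcard : S.card = rank ℬ A)
    (hx : x ∈ clo E ℬ A) (hxS : x ∉ S) : ¬ Indep ℬ (insert x S) := by
  intro hind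
  have h1 : (insert x S).card ≤ rank ℬ (insert x A) :=
    le_rank_of_indep hind (Finset.insert_subset_insert _ hSA)
  rw [Finset.card_insert_of_notMem hxS, rank_insert_eq_of_mem_clo hx] at h1
  omega

lemma mem_clo_of_insert_dep (hM : IsMatroidOn E ℬ) {A S : Finset α} {x : α}
    (hxE : x ∈ E) (hS : Indep ℬ S) (hSA : S ⊆ A) (hcard : S.card = rank ℬ A)
    (hdep : ¬ Indep ℬ (insert x S)) : x ∈ clo E ℬ A := by
  by_contra hx
  have hr := rank_insert_succ_of_notMem_clo hxE hx
  have hlt : S.card < rank ℬ (insert x A) := by omega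
  obtain ⟨T₀, hT₀, hT₀A, hT₀card⟩ := exists_max_indep hM.1 (insert x A)
  obtain ⟨y, hyT, hyS, hyind⟩ := indep_augment hM hS hT₀ (by omega)
  have hyA : y ∈ insert x A := hT₀A hyT
  rw [Finset.mem_insert] at hyA
  rcases hyA with rfl | hyA
  · exact hdep hyind
  · have : (insert y S).card ≤ rank ℬ A :=
      le_rank_of_indep hyind (Finset.insert_subset hyA hSA)
    rw [Finset.card_insert_of_notMem hyS] at this
    omega

lemma rank_clo (hM : IsMatroidOn E ℬ) {A : Finset α} :
    rank ℬ (clo E ℬ A) = rank ℬ A := by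
  refine le_antisymm ?_ (rank_mono subset_clo)
  by_contra hlt
  push_neg at hlt
  obtain ⟨S, hS, hSA, hScard⟩ := exists_max_indep hM.1 A
  obtain ⟨T₀, hT₀, hT₀A, hT₀card⟩ := exists_max_indep hM.1 (clo E ℬ A)
  obtain ⟨y, hyT, hyS, hyind⟩ := indep_augment hM hS hT₀ (by omega)
  have hy : y ∈ clo E ℬ A := hT₀A hyT
  have h1 : (insert y S).card ≤ rank ℬ (insert y A) :=
    le_rank_of_indep hyind (Finset.insert_subset_insert _ hSA)
  rw [Finset.card_insert_of_notMem hyS, rank_insert_eq_of_mem_clo hy] at h1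
  omega

lemma clo_mono (hM : IsMatroidOn E ℬ) {A A' : Finset α} (h : A ⊆ A') :
    clo E ℬ A ⊆ clo E ℬ A' := by
  intro x hx
  rcases Finset.mem_union.mp hx with hxA | hxf
  · exact subset_clo (h hxA)
  · rw [Finset.mem_filter] at hxf
    by_cases hxA' : x ∈ A'
    · exact subset_clo hxA'
    · obtain ⟨S, hS, hSA, hScard⟩ := exists_max_indep hM.1 A
      obtain ⟨S', hS', hSsub, hS'A, hS'card⟩ := exists_indep_superset hM hS (hSA.trans h)
      by_cases hxS' : x ∈ S'
      · exact absurd (hS'A hxS') hxA'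
      · refine mem_clo_of_insert_dep hM hxf.1 hS' hS'A hS'card ?_
        intro hind
        have hxS : x ∉ S := fun hc => hxS' (hSsub hc)
        have : ¬ Indep ℬ (insert x S) :=
          insert_dep_of_mem_clo hM hS hSA hScard hx hxS
        exact this (indep_mono hind (Finset.insert_subset_insert _ hSsub))

lemma flat_clo (hM : IsMatroidOn E ℬ) {A : Finset α} (hA : A ⊆ E) :
    Flat E ℬ (clo E ℬ A) := by
  refine ⟨clo_subset_ground hA, fun e he => ?_⟩
  rw [Finset.mem_sdiff] at he
  have h1 : rank ℬ (insert e A) = rank ℬ A + 1 :=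
    rank_insert_succ_of_notMem_clo he.1 he.2
  have h2 : rank ℬ (insert e A) ≤ rank ℬ (insert e (clo E ℬ A)) :=
    rank_mono (Finset.insert_subset_insert _ subset_clo)
  rw [rank_clo hM]
  omega

-- circuits
lemma circuit_mem_insert {C S : Finset α} {f : α} (hC : Circuit E ℬ C)
    (hS : Indep ℬ S) (hsub : C ⊆ insert f S) : f ∈ C := by
  by_contra hf
  refine hC.2.1 (indep_mono hS fun x hx => ?_)
  rcases Finset.mem_insert.mp (hsub hx) with rfl | h
  · exact absurd hx hf
  · exact h

lemma exists_circuit (hM : IsMatroidOn E ℬ) {X : Finset α} (hX : X ⊆ E)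
    (hdep : ¬ Indep ℬ X) : ∃ C, Circuit E ℬ C ∧ C ⊆ X := by
  suffices H : ∀ n (X : Finset α), X.card ≤ n → X ⊆ E → ¬ Indep ℬ X →
      ∃ C, Circuit E ℬ C ∧ C ⊆ X from H X.card X le_rfl hX hdep
  intro n
  induction n with
  | zero =>
    intro X hc hX hdep
    have hX0 : X = ∅ := Finset.card_eq_zero.mp (by omega)
    exact absurd (hX0 ▸ indep_empty hM.1) hdep
  | succ n ih =>
    intro X hc hX hdep
    by_cases h : ∀ D ⊂ X, Indep ℬ D
    · exact ⟨X, ⟨hX, hdep, h⟩, le_refl _⟩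
    · push_neg at h
      obtain ⟨D, hD, hDdep⟩ := h
      have hDc : D.card ≤ n := by have := Finset.card_lt_card hD; omega
      obtain ⟨C, hC, hCD⟩ := ih D hDc (hD.subset.trans hX) hDdep
      exact ⟨C, hC, hCD.trans hD.subset⟩

lemma circuit_unique (hM : IsMatroidOn E ℬ) {S C₁ C₂ : Finset α} {f : α}
    (hS : Indep ℬ S) (h₁ : Circuit E ℬ C₁) (h₂ : Circuit E ℬ C₂)
    (hC₁ : C₁ ⊆ insert f S) (hC₂ : C₂ ⊆ insert f S) : C₁ = C₂ := by
  by_contra hne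
  have hx : ∃ x, x ∈ C₁ ∧ x ∉ C₂ := by
    by_contra hcon
    push_neg at hcon
    have hsub : C₁ ⊆ C₂ := hcon
    have hss : C₁ ⊂ C₂ := Finset.ssubset_iff_subset_ne.mpr ⟨hsub, hne⟩
    exact h₁.2.1 (h₂.2.2 _ hss)
  obtain ⟨x, hxC₁, hxC₂⟩ := hx
  have hf₁ : f ∈ C₁ := circuit_mem_insert h₁ hS hC₁
  have hf₂ : f ∈ C₂ := circuit_mem_insert h₂ hS hC₂
  obtain ⟨U, hU⟩ : ∃ U, U = C₁ ∪ C₂ := ⟨_, rfl⟩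
  have hUsub : U ⊆ insert f S := by rw [hU]; exact Finset.union_subset hC₁ hC₂
  have hUdep : ¬ Indep ℬ U := fun h =>
    h₁.2.1 (indep_mono h (by rw [hU]; exact Finset.subset_union_left))
  have hfU : f ∈ U := by rw [hU]; exact Finset.mem_union_left _ hf₁
  have hUerase : U.erase f ⊆ S := by
    intro z hz
    rw [Finset.mem_erase] at hz
    rcases Finset.mem_insert.mp (hUsub hz.2) with h | h
    · exact absurd h hz.1
    · exact h
  have hrk_ge : U.card - 1 ≤ rank ℬ U := by
    have h1 : (U.erase f).card ≤ rank ℬ U :=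
      le_rank_of_indep (indep_mono hS hUerase) (Finset.erase_subset _ _)
    rw [Finset.card_erase_of_mem hfU] at h1
    exact h1
  have hrk_lt : rank ℬ U ≠ U.card := fun h => hUdep (indep_of_rank_eq hM.1 h)
  have hrk : rank ℬ U = U.card - 1 := by
    have := rank_le_card (ℬ := ℬ) (A := U)
    omega
  have hC₁x : Indep ℬ (C₁.erase x) := h₁.2.2 _ (Finset.erase_ssubset hxC₁)
  obtain ⟨J, hJind, hJsub, hJU, hJcard⟩ :=
    exists_indep_superset hM hC₁x (A := U)
      (by rw [hU]; exact (Finset.erase_subset _ _).trans Finset.subset_union_left)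
  have hcard1 : (U \ J).card = 1 := by
    rw [Finset.card_sdiff_of_subset hJU, hJcard, hrk]
    have : 0 < U.card := Finset.card_pos.mpr ⟨f, hfU⟩
    omega
  obtain ⟨y, hy⟩ := Finset.card_eq_one.mp hcard1
  have hyU : y ∈ U := by
    have : y ∈ U \ J := hy ▸ Finset.mem_singleton_self y
    exact (Finset.mem_sdiff.mp this).1
  have hyJ : y ∉ J := by
    have : y ∈ U \ J := hy ▸ Finset.mem_singleton_self y
    exact (Finset.mem_sdiff.mp this).2
  have hJeq : ∀ z, z ∈ U → z ≠ y → z ∈ J := by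
    intro z hzU hzy
    by_contra hzJ
    have : z ∈ U \ J := Finset.mem_sdiff.mpr ⟨hzU, hzJ⟩
    rw [hy, Finset.mem_singleton] at this
    exact hzy this
  have hfx : f ≠ x := fun h => hxC₂ (h ▸ hf₂)
  have hfJ : f ∈ J := hJsub (Finset.mem_erase.mpr ⟨fun h => hfx h, hf₁⟩)
  have hyf : y ≠ f := fun h => hyJ (h ▸ hfJ)
  by_cases hyx : y = x
  · subst hyx
    have : C₂ ⊆ J := fun z hz => hJeq z (by rw [hU]; exact Finset.mem_union_right _ hz)
      (fun h => hxC₂ (h ▸ hz))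
    exact h₂.2.1 (indep_mono hJind this)
  · have hyC₁ : y ∉ C₁ := by
      intro hyC₁
      exact hyJ (hJsub (Finset.mem_erase.mpr ⟨hyx, hyC₁⟩))
    have : C₁ ⊆ J := fun z hz => hJeq z (by rw [hU]; exact Finset.mem_union_left _ hz)
      (fun h => hyC₁ (h ▸ hz))
    exact h₁.2.1 (indep_mono hJind this)

lemma exists_fund_circuit (hM : IsMatroidOn E ℬ) {S : Finset α} {f : α}
    (hS : Indep ℬ S) (hsub : insert f S ⊆ E) (hdep : ¬ Indep ℬ (insert f S)) :
    ∃ C, Circuit E ℬ C ∧ C ⊆ insert f S ∧ f ∈ C := by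
  obtain ⟨C, hC, hCsub⟩ := exists_circuit hM hsub hdep
  exact ⟨C, hC, hCsub, circuit_mem_insert hC hS hCsub⟩

-- fundamental cocircuits
def fundCocircuit (E : Finset α) (ℬ : Finset (Finset α)) (B' : Finset α) (e : α) :
    Finset α :=
  insert e ((E \ B').filter fun x => insert x (B'.erase e) ∈ ℬ)

lemma indep_card_eq_basis (hM : IsMatroidOn E ℬ) {S B : Finset α} (hB : B ∈ ℬ)
    (hS : Indep ℬ S) (hcard : S.card = B.card) : S ∈ ℬ := by
  obtain ⟨B₀, hB₀, hSB₀⟩ := hS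
  have : S = B₀ := Finset.eq_of_subset_of_card_le hSB₀
    (by rw [hcard, basis_card_eq hM hB₀ hB])
  exact this ▸ hB₀

lemma fundCocircuit_subset {B' : Finset α} {e : α} :
    fundCocircuit E ℬ B' e ⊆ insert e (E \ B') :=
  Finset.insert_subset_insert _ (Finset.filter_subset _ _)

lemma mem_fundCocircuit_self {B' : Finset α} (e : α) : e ∈ fundCocircuit E ℬ B' e :=
  Finset.mem_insert_self _ _

lemma mem_fundCocircuit_of_basis {B' : Finset α} {e x : α} (hx : x ∈ E) (hxB : x ∉ B')
    (h : insert x (B'.erase e) ∈ ℬ) : x ∈ fundCocircuit E ℬ B' e :=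
  Finset.mem_insert_of_mem (Finset.mem_filter.mpr ⟨Finset.mem_sdiff.mpr ⟨hx, hxB⟩, h⟩)

lemma basis_of_mem_fundCocircuit {B' : Finset α} {e x : α}
    (hx : x ∈ fundCocircuit E ℬ B' e) (hxe : x ≠ e) :
    x ∉ B' ∧ insert x (B'.erase e) ∈ ℬ := by
  rcases Finset.mem_insert.mp hx with h | h
  · exact absurd h hxe
  · rw [Finset.mem_filter, Finset.mem_sdiff] at h
    exact ⟨h.1.2, h.2⟩

lemma inter_fundCocircuit_subset {B' : Finset α} {e : α} (he : e ∈ B') :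
    B' ∩ fundCocircuit E ℬ B' e = {e} := by
  ext x
  rw [Finset.mem_inter, Finset.mem_singleton]
  constructor
  · rintro ⟨hxB, hxD⟩
    by_contra hxe
    exact (basis_of_mem_fundCocircuit hxD hxe).1 hxB
  · rintro rfl
    exact ⟨he, mem_fundCocircuit_self _⟩

lemma fundCocircuit_meets (hM : IsMatroidOn E ℬ) {B' : Finset α} (hB' : B' ∈ ℬ)
    {e : α} (he : e ∈ B') : ∀ B'' ∈ ℬ, (B'' ∩ fundCocircuit E ℬ B' e).Nonempty := by
  intro B'' hB''
  by_contra hcon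
  rw [Finset.not_nonempty_iff_eq_empty] at hcon
  have hBsub : B'' ⊆ clo E ℬ (B'.erase e) := by
    intro x hx
    have hxE : x ∈ E := hM.2.1 B'' hB'' hx
    have hxD : x ∉ fundCocircuit E ℬ B' e := by
      intro h
      have hmem : x ∈ B'' ∩ fundCocircuit E ℬ B' e := Finset.mem_inter.mpr ⟨hx, h⟩
      rw [hcon] at hmem
      exact absurd hmem (Finset.notMem_empty x)
    have hxe : x ≠ e := by
      intro h
      subst h
      exact hxD (mem_fundCocircuit_self _)
    by_cases hxB : x ∈ B'.erase e
    · exact subset_clo hxB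
    · by_contra hclo
      have hxB' : x ∉ B' := by
        intro h
        exact hxB (Finset.mem_erase.mpr ⟨hxe, h⟩)
      have hind : Indep ℬ (B'.erase e) :=
        indep_mono (indep_of_mem hB') (Finset.erase_subset _ _)
      have hrk : rank ℬ (insert x (B'.erase e)) = rank ℬ (B'.erase e) + 1 :=
        rank_insert_succ_of_notMem_clo hxE hclo
      have hxBe : x ∉ B'.erase e := hxB
      have hind2 : Indep ℬ (insert x (B'.erase e)) := by
        refine indep_of_rank_eq hM.1 ?_
        rw [hrk, Finset.card_insert_of_notMem hxBe, rank_eq_card_of_indep hind]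
      have hcard : (insert x (B'.erase e)).card = B'.card := by
        rw [Finset.card_insert_of_notMem hxBe, Finset.card_erase_of_mem he]
        have : 0 < B'.card := Finset.card_pos.mpr ⟨e, he⟩
        omega
      exact hxD (mem_fundCocircuit_of_basis hxE hxB'
        (indep_card_eq_basis hM hB' hind2 hcard))
  have h1 : B''.card ≤ rank ℬ (clo E ℬ (B'.erase e)) :=
    le_rank_of_indep (indep_of_mem hB'') hBsub
  rw [rank_clo hM, rank_eq_card_of_indep
    (indep_mono (indep_of_mem hB') (Finset.erase_subset _ _)),
    Finset.card_erase_of_mem he] at h1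
  have h2 : B''.card = B'.card := basis_card_eq hM hB'' hB'
  have : 0 < B'.card := Finset.card_pos.mpr ⟨e, he⟩
  omega

lemma fundCocircuit_cocircuit (hM : IsMatroidOn E ℬ) {B' : Finset α} (hB' : B' ∈ ℬ)
    {e : α} (he : e ∈ B') : Cocircuit E ℬ (fundCocircuit E ℬ B' e) := by
  refine ⟨?_, fundCocircuit_meets hM hB' he, ?_⟩
  · refine fundCocircuit_subset.trans ?_
    refine Finset.insert_subset (hM.2.1 B' hB' he) (Finset.sdiff_subset)
  · intro D hD
    obtain ⟨g, hgD, hgD'⟩ := Finset.exists_of_ssubset hD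
    by_cases hge : g = e
    · refine ⟨B', hB', ?_⟩
      rw [Finset.eq_empty_iff_forall_notMem]
      intro x hx
      rw [Finset.mem_inter] at hx
      have hxe : x ∈ B' ∩ fundCocircuit E ℬ B' e :=
        Finset.mem_inter.mpr ⟨hx.1, hD.subset hx.2⟩
      rw [inter_fundCocircuit_subset he, Finset.mem_singleton] at hxe
      exact hgD' ((hge.trans hxe.symm) ▸ hx.2)
    · obtain ⟨hgB, hgbasis⟩ := basis_of_mem_fundCocircuit hgD hge
      refine ⟨insert g (B'.erase e), hgbasis, ?_⟩
      rw [Finset.eq_empty_iff_forall_notMem]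
      intro x hx
      rw [Finset.mem_inter, Finset.mem_insert] at hx
      obtain ⟨hx1, hx2⟩ := hx
      rcases hx1 with rfl | hx1
      · exact hgD' hx2
      · have hxD : x ∈ fundCocircuit E ℬ B' e := hD.subset hx2
        have : x ∈ B' ∩ fundCocircuit E ℬ B' e :=
          Finset.mem_inter.mpr ⟨Finset.mem_of_mem_erase hx1, hxD⟩
        rw [inter_fundCocircuit_subset he, Finset.mem_singleton] at this
        subst this
        exact (Finset.mem_erase.mp hx1).1 rfl

lemma cocircuit_eq_fundCocircuit (hM : IsMatroidOn E ℬ) {B' : Finset α} (hB' : B' ∈ ℬ)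
    {e : α} (he : e ∈ B') {C : Finset α} (hC : Cocircuit E ℬ C)
    (hsub : C ⊆ insert e (E \ B')) : C = fundCocircuit E ℬ B' e := by
  have heC : e ∈ C := by
    obtain ⟨x, hx⟩ := hC.2.1 B' hB'
    rw [Finset.mem_inter] at hx
    rcases Finset.mem_insert.mp (hsub hx.2) with rfl | h
    · exact hx.2
    · exact absurd hx.1 (Finset.mem_sdiff.mp h).2
  have hDC : fundCocircuit E ℬ B' e ⊆ C := by
    intro g hg
    by_cases hge : g = e
    · exact hge ▸ heC
    · obtain ⟨hgB, hgbasis⟩ := basis_of_mem_fundCocircuit hg hge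
      obtain ⟨x, hx⟩ := hC.2.1 _ hgbasis
      rw [Finset.mem_inter, Finset.mem_insert] at hx
      obtain ⟨hx1, hx2⟩ := hx
      rcases hx1 with rfl | hx1
      · exact hx2
      · exfalso
        rcases Finset.mem_insert.mp (hsub hx2) with rfl | h
        · exact (Finset.mem_erase.mp hx1).1 rfl
        · exact (Finset.mem_sdiff.mp h).2 (Finset.mem_of_mem_erase hx1)
  rcases (Finset.ssubset_iff_subset_ne.mpr ⟨hDC, ?_⟩ : _) with _
  · by_contra hne
    have hss : fundCocircuit E ℬ B' e ⊂ C :=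
      Finset.ssubset_iff_subset_ne.mpr ⟨hDC, fun h => hne h.symm⟩
    obtain ⟨B'', hB'', hint⟩ := hC.2.2 _ hss
    obtain ⟨x, hx⟩ := fundCocircuit_meets hM hB' he B'' hB''
    rw [hint] at hx
    exact absurd hx (Finset.notMem_empty x)

lemma rank_union_eq_of_subset_clo (hM : IsMatroidOn E ℬ) {A X : Finset α}
    (h : ∀ x ∈ X, x ∈ clo E ℬ A) : rank ℬ (A ∪ X) = rank ℬ A := by
  induction X using Finset.induction with
  | empty => simp
  | @insert x X hxX ih =>
    have h1 : A ∪ insert x X = insert x (A ∪ X) := by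
      ext z; simp only [Finset.mem_union, Finset.mem_insert]; tauto
    rw [h1]
    have h2 : x ∈ clo E ℬ (A ∪ X) :=
      clo_mono hM Finset.subset_union_left (h x (Finset.mem_insert_self _ _))
    rw [rank_insert_eq_of_mem_clo h2]
    exact ih fun y hy => h y (Finset.mem_insert_of_mem hy)

end Core

section Minor
variable {E : Finset α} {ℬ : Finset (Finset α)} {F : Finset α}

lemma mem_restrBases_iff {J : Finset α} :
    J ∈ restrBases ℬ F ↔
      J ⊆ F ∧ Indep ℬ J ∧ ∀ g ∈ F, g ∉ J → ¬ Indep ℬ (insert g J) := by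
  rw [restrBases, Finset.mem_filter, Finset.mem_powerset]

lemma restrBases_card (hM : IsMatroidOn E ℬ) {J : Finset α}
    (hJ : J ∈ restrBases ℬ F) : J.card = rank ℬ F := by
  rw [mem_restrBases_iff] at hJ
  obtain ⟨hJF, hJind, hJmax⟩ := hJ
  refine le_antisymm (le_rank_of_indep hJind hJF) ?_
  by_contra hlt
  push_neg at hlt
  obtain ⟨T, hT, hTF, hTcard⟩ := exists_max_indep hM.1 F
  obtain ⟨x, hxT, hxJ, hxind⟩ := indep_augment hM hJind hT (by omega)
  exact hJmax x (hTF hxT) hxJ hxind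

lemma restr_basis_of_card (hM : IsMatroidOn E ℬ) {J : Finset α} (hJF : J ⊆ F)
    (hind : Indep ℬ J) (hcard : J.card = rank ℬ F) : J ∈ restrBases ℬ F := by
  rw [mem_restrBases_iff]
  refine ⟨hJF, hind, fun g hg hgJ hind2 => ?_⟩
  have : (insert g J).card ≤ rank ℬ F :=
    le_rank_of_indep hind2 (Finset.insert_subset hg hJF)
  rw [Finset.card_insert_of_notMem hgJ] at this
  omega

lemma exists_restrBasis_superset (hM : IsMatroidOn E ℬ) {S : Finset α}
    (hS : Indep ℬ S) (hSF : S ⊆ F) : ∃ J ∈ restrBases ℬ F, S ⊆ J := by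
  obtain ⟨T, hT, hST, hTF, hTcard⟩ := exists_indep_superset hM hS hSF
  exact ⟨T, restr_basis_of_card hM hTF hT hTcard, hST⟩

lemma indep_restr_iff (hM : IsMatroidOn E ℬ) {S : Finset α} :
    Indep (restrBases ℬ F) S ↔ S ⊆ F ∧ Indep ℬ S := by
  constructor
  · rintro ⟨J, hJ, hSJ⟩
    rw [mem_restrBases_iff] at hJ
    exact ⟨hSJ.trans hJ.1, indep_mono hJ.2.1 hSJ⟩
  · rintro ⟨hSF, hS⟩
    obtain ⟨J, hJ, hSJ⟩ := exists_restrBasis_superset hM hS hSF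
    exact ⟨J, hJ, hSJ⟩

lemma restrBases_nonempty (hM : IsMatroidOn E ℬ) : (restrBases ℬ F).Nonempty := by
  obtain ⟨J, hJ, -⟩ := exists_restrBasis_superset hM (indep_empty hM.1)
    (Finset.empty_subset F)
  exact ⟨J, hJ⟩

lemma isMatroidOn_restr (hM : IsMatroidOn E ℬ) : IsMatroidOn F (restrBases ℬ F) := by
  refine ⟨restrBases_nonempty hM, fun J hJ => (mem_restrBases_iff.mp hJ).1, ?_⟩
  intro B₁ hB₁ B₂ hB₂ e he
  rw [Finset.mem_sdiff] at he
  have h₁ := mem_restrBases_iff.mp hB₁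
  have h₂ := mem_restrBases_iff.mp hB₂
  have hind : Indep ℬ (B₁.erase e) := indep_mono h₁.2.1 (Finset.erase_subset _ _)
  have hcard : (B₁.erase e).card < B₂.card := by
    rw [Finset.card_erase_of_mem he.1, restrBases_card hM hB₁, restrBases_card hM hB₂]
    have : 0 < rank ℬ F := by
      have h0 : 0 < B₁.card := Finset.card_pos.mpr ⟨e, he.1⟩
      rw [restrBases_card hM hB₁] at h0
      exact h0
    omega
  obtain ⟨x, hxB₂, hxB₁e, hxind⟩ := indep_augment hM hind h₂.2.1 hcard
  have hxe : x ≠ e := fun h => he.2 (h ▸ hxB₂)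
  have hxB₁ : x ∉ B₁ := fun h => hxB₁e (Finset.mem_erase.mpr ⟨hxe, h⟩)
  refine ⟨x, Finset.mem_sdiff.mpr ⟨hxB₂, hxB₁⟩, ?_⟩
  refine restr_basis_of_card hM ?_ hxind ?_
  · exact Finset.insert_subset (h₂.1 hxB₂)
      ((Finset.erase_subset _ _).trans h₁.1)
  · rw [Finset.card_insert_of_notMem hxB₁e, Finset.card_erase_of_mem he.1,
      restrBases_card hM hB₁]
    have h0 : 0 < B₁.card := Finset.card_pos.mpr ⟨e, he.1⟩
    rw [restrBases_card hM hB₁] at h0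
    omega

lemma circuit_restr_iff (hM : IsMatroidOn E ℬ) (hF : F ⊆ E) {C : Finset α} :
    Circuit F (restrBases ℬ F) C ↔ Circuit E ℬ C ∧ C ⊆ F := by
  constructor
  · rintro ⟨hCF, hCdep, hCmin⟩
    refine ⟨⟨hCF.trans hF, ?_, ?_⟩, hCF⟩
    · intro h
      exact hCdep ((indep_restr_iff hM).mpr ⟨hCF, h⟩)
    · intro D hD
      exact ((indep_restr_iff hM).mp (hCmin D hD)).2
  · rintro ⟨⟨hCE, hCdep, hCmin⟩, hCF⟩
    refine ⟨hCF, ?_, ?_⟩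
    · intro h
      exact hCdep ((indep_restr_iff hM).mp h).2
    · intro D hD
      exact (indep_restr_iff hM).mpr ⟨hD.subset.trans hCF, hCmin D hD⟩

lemma restrBasis_spans (hM : IsMatroidOn E ℬ) (hF : F ⊆ E) {J : Finset α}
    (hJ : J ∈ restrBases ℬ F) {x : α} (hx : x ∈ F) : x ∈ clo E ℬ J := by
  obtain ⟨hJF, hJind, hJmax⟩ := mem_restrBases_iff.mp hJ
  by_cases hxJ : x ∈ J
  · exact subset_clo hxJ
  · exact mem_clo_of_insert_dep hM (hF hx) hJind (le_refl _)
      (rank_eq_card_of_indep hJind).symm (hJmax x hx hxJ)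

lemma mem_contrBases_iff {S : Finset α} :
    S ∈ contrBases E ℬ F ↔ S ⊆ E \ F ∧ ∃ J ∈ restrBases ℬ F, S ∪ J ∈ ℬ := by
  rw [contrBases, Finset.mem_filter, Finset.mem_powerset]

lemma restr_union_indep_any (hM : IsMatroidOn E ℬ) (hF : F ⊆ E) {S J J' : Finset α}
    (hJ : J ∈ restrBases ℬ F) (hJ' : J' ∈ restrBases ℬ F)
    (hSF : S ⊆ E \ F) (h : Indep ℬ (S ∪ J)) : Indep ℬ (S ∪ J') := by
  have hdisj : ∀ x ∈ S, x ∉ F := fun x hx => (Finset.mem_sdiff.mp (hSF hx)).2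
  have hkey : rank ℬ ((S ∪ J') ∪ J) = rank ℬ (S ∪ J') := by
    refine rank_union_eq_of_subset_clo hM fun x hx => ?_
    have : x ∈ clo E ℬ J' := restrBasis_spans hM hF hJ' ((mem_restrBases_iff.mp hJ).1 hx)
    exact clo_mono hM (Finset.subset_union_right) this
  have h1 : (S ∪ J).card ≤ rank ℬ ((S ∪ J') ∪ J) :=
    le_rank_of_indep h (Finset.union_subset
      ((Finset.subset_union_left).trans Finset.subset_union_left)
      Finset.subset_union_right)
  have hcardJ : (S ∪ J).card = S.card + J.card := by
    rw [Finset.card_union_of_disjoint]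
    exact Finset.disjoint_left.mpr fun x hx hxJ =>
      hdisj x hx ((mem_restrBases_iff.mp hJ).1 hxJ)
  have hcardJ' : (S ∪ J').card = S.card + J'.card := by
    rw [Finset.card_union_of_disjoint]
    exact Finset.disjoint_left.mpr fun x hx hxJ' =>
      hdisj x hx ((mem_restrBases_iff.mp hJ').1 hxJ')
  have hJc : J.card = rank ℬ F := restrBases_card hM hJ
  have hJ'c : J'.card = rank ℬ F := restrBases_card hM hJ'
  refine indep_of_rank_eq hM.1 ?_
  have h2 : rank ℬ (S ∪ J') ≤ (S ∪ J').card := rank_le_card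
  omega

lemma indep_contr_iff (hM : IsMatroidOn E ℬ) (hF : F ⊆ E) {S J : Finset α}
    (hJ : J ∈ restrBases ℬ F) :
    Indep (contrBases E ℬ F) S ↔ S ⊆ E \ F ∧ Indep ℬ (S ∪ J) := by
  constructor
  · rintro ⟨Sc, hSc, hSSc⟩
    obtain ⟨hScEF, J₀, hJ₀, hbasis⟩ := mem_contrBases_iff.mp hSc
    have hind : Indep ℬ (Sc ∪ J) :=
      restr_union_indep_any hM hF hJ₀ hJ hScEF (indep_of_mem hbasis)
    exact ⟨hSSc.trans hScEF, indep_mono hind (Finset.union_subset_union hSSc (le_refl _))⟩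
  · rintro ⟨hSEF, hind⟩
    obtain ⟨B₀, hB₀, hsub⟩ := hind
    have hJB₀ : B₀ ∩ F = J := by
      obtain ⟨hJF, hJind, hJmax⟩ := mem_restrBases_iff.mp hJ
      refine le_antisymm ?_ ?_
      · intro x hx
        rw [Finset.mem_inter] at hx
        by_contra hxJ
        refine hJmax x hx.2 hxJ (indep_mono (indep_of_mem hB₀) ?_)
        exact Finset.insert_subset hx.1 ((Finset.subset_union_right).trans hsub)
      · intro x hx
        exact Finset.mem_inter.mpr
          ⟨hsub (Finset.mem_union_right _ hx), hJF hx⟩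
    refine ⟨B₀ \ F, ?_, ?_⟩
    · rw [mem_contrBases_iff]
      refine ⟨Finset.sdiff_subset_sdiff (hM.2.1 B₀ hB₀) (le_refl _), J, hJ, ?_⟩
      have : B₀ \ F ∪ J = B₀ := by
        rw [← hJB₀]
        ext x
        simp only [Finset.mem_union, Finset.mem_sdiff, Finset.mem_inter]
        tauto
      rw [this]
      exact hB₀
    · intro x hx
      rw [Finset.mem_sdiff]
      exact ⟨hsub (Finset.mem_union_left _ hx), fun h =>
        (Finset.mem_sdiff.mp (hSEF hx)).2 h⟩

lemma contr_union_basis (hM : IsMatroidOn E ℬ) (hF : F ⊆ E) {Sc J : Finset α}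
    (hSc : Sc ∈ contrBases E ℬ F) (hJ : J ∈ restrBases ℬ F) : Sc ∪ J ∈ ℬ := by
  obtain ⟨hScEF, J₀, hJ₀, hbasis⟩ := mem_contrBases_iff.mp hSc
  have hind : Indep ℬ (Sc ∪ J) :=
    restr_union_indep_any hM hF hJ₀ hJ hScEF (indep_of_mem hbasis)
  refine indep_card_eq_basis hM hbasis hind ?_
  have d1 : Disjoint Sc J := Finset.disjoint_left.mpr fun x hx hxJ =>
    (Finset.mem_sdiff.mp (hScEF hx)).2 ((mem_restrBases_iff.mp hJ).1 hxJ)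
  have d0 : Disjoint Sc J₀ := Finset.disjoint_left.mpr fun x hx hxJ =>
    (Finset.mem_sdiff.mp (hScEF hx)).2 ((mem_restrBases_iff.mp hJ₀).1 hxJ)
  rw [Finset.card_union_of_disjoint d1, Finset.card_union_of_disjoint d0,
    restrBases_card hM hJ, restrBases_card hM hJ₀]

lemma contrBases_card (hM : IsMatroidOn E ℬ) (hF : F ⊆ E) {Sc : Finset α}
    (hSc : Sc ∈ contrBases E ℬ F) {B₀ : Finset α} (hB₀ : B₀ ∈ ℬ) :
    Sc.card + rank ℬ F = B₀.card := by
  obtain ⟨hScEF, J₀, hJ₀, hbasis⟩ := mem_contrBases_iff.mp hSc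
  have d0 : Disjoint Sc J₀ := Finset.disjoint_left.mpr fun x hx hxJ =>
    (Finset.mem_sdiff.mp (hScEF hx)).2 ((mem_restrBases_iff.mp hJ₀).1 hxJ)
  have := basis_card_eq hM hbasis hB₀
  rw [Finset.card_union_of_disjoint d0, restrBases_card hM hJ₀] at this
  exact this

lemma isMatroidOn_contr (hM : IsMatroidOn E ℬ) (hF : F ⊆ E) :
    IsMatroidOn (E \ F) (contrBases E ℬ F) := by
  obtain ⟨J, hJ⟩ := restrBases_nonempty (F := F) hM
  have hne : (contrBases E ℬ F).Nonempty := by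
    have hJind : Indep ℬ J := (mem_restrBases_iff.mp hJ).2.1
    have hiC : Indep (contrBases E ℬ F) ∅ := (indep_contr_iff hM hF hJ (S := ∅)).mpr
      ⟨Finset.empty_subset _, by simpa using hJind⟩
    obtain ⟨Sc, hSc, -⟩ := hiC
    exact ⟨Sc, hSc⟩
  refine ⟨hne, fun S hS => (mem_contrBases_iff.mp hS).1, ?_⟩
  intro S₁ hS₁ S₂ hS₂ e he
  rw [Finset.mem_sdiff] at he
  have hcard12 : S₁.card = S₂.card := by
    obtain ⟨B₀, hB₀⟩ := hM.1
    have c1 := contrBases_card hM hF hS₁ hB₀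
    have c2 := contrBases_card hM hF hS₂ hB₀
    omega
  have hb1 : S₁ ∪ J ∈ ℬ := contr_union_basis hM hF hS₁ hJ
  have hb2 : S₂ ∪ J ∈ ℬ := contr_union_basis hM hF hS₂ hJ
  have hind1 : Indep ℬ ((S₁.erase e) ∪ J) :=
    indep_mono (indep_of_mem hb1)
      (Finset.union_subset_union (Finset.erase_subset _ _) (le_refl _))
  have hd1 : Disjoint (S₁.erase e) J := Finset.disjoint_left.mpr fun x hx hxJ => by
    have hx1 : x ∈ S₁ := Finset.mem_of_mem_erase hx
    have := (mem_contrBases_iff.mp hS₁).1 hx1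
    exact (Finset.mem_sdiff.mp this).2 ((mem_restrBases_iff.mp hJ).1 hxJ)
  have hd2 : Disjoint S₂ J := Finset.disjoint_left.mpr fun x hx hxJ => by
    have := (mem_contrBases_iff.mp hS₂).1 hx
    exact (Finset.mem_sdiff.mp this).2 ((mem_restrBases_iff.mp hJ).1 hxJ)
  have hclt : ((S₁.erase e) ∪ J).card < (S₂ ∪ J).card := by
    rw [Finset.card_union_of_disjoint hd1, Finset.card_union_of_disjoint hd2,
      Finset.card_erase_of_mem he.1]
    have h0 : 0 < S₁.card := Finset.card_pos.mpr ⟨e, he.1⟩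
    omega
  obtain ⟨x, hxU, hxnot, hxind⟩ := indep_augment hM hind1 (indep_of_mem hb2) hclt
  have hxJ : x ∉ J := fun h => hxnot (Finset.mem_union_right _ h)
  have hxS₂ : x ∈ S₂ := (Finset.mem_union.mp hxU).resolve_right hxJ
  have hxS₁ : x ∉ S₁ := by
    intro h
    have hxe : x ≠ e := fun hh => he.2 (hh ▸ hxS₂)
    exact hxnot (Finset.mem_union_left _ (Finset.mem_erase.mpr ⟨hxe, h⟩))
  refine ⟨x, Finset.mem_sdiff.mpr ⟨hxS₂, hxS₁⟩, ?_⟩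
  rw [mem_contrBases_iff]
  have hxEF : x ∈ E \ F := (mem_contrBases_iff.mp hS₂).1 hxS₂
  have hsub : insert x (S₁.erase e) ⊆ E \ F := by
    refine Finset.insert_subset hxEF ?_
    exact (Finset.erase_subset _ _).trans (mem_contrBases_iff.mp hS₁).1
  refine ⟨hsub, J, hJ, ?_⟩
  have heq : insert x (S₁.erase e) ∪ J = insert x ((S₁.erase e) ∪ J) := by
    ext z; simp only [Finset.mem_union, Finset.mem_insert]; tauto
  rw [heq]
  refine indep_card_eq_basis hM hb2 hxind ?_
  rw [Finset.card_insert_of_notMem hxnot, Finset.card_union_of_disjoint hd1,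
    Finset.card_union_of_disjoint hd2, Finset.card_erase_of_mem he.1]
  have h0 : 0 < S₁.card := Finset.card_pos.mpr ⟨e, he.1⟩
  omega

lemma contr_dep_of_circuit (hM : IsMatroidOn E ℬ) (hF : F ⊆ E) {C J : Finset α}
    (hJ : J ∈ restrBases ℬ F) (hC : Circuit E ℬ C) (hCF : C ∩ F ⊆ J) :
    ¬ Indep (contrBases E ℬ F) (C \ F) := by
  intro hind
  obtain ⟨-, hind2⟩ := (indep_contr_iff hM hF hJ).mp hind
  refine hC.2.1 (indep_mono hind2 fun x hx => ?_)
  by_cases hxF : x ∈ F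
  · exact Finset.mem_union_right _ (hCF (Finset.mem_inter.mpr ⟨hx, hxF⟩))
  · exact Finset.mem_union_left _ (Finset.mem_sdiff.mpr ⟨hx, hxF⟩)

lemma sdiff_union_inter_basis (B F : Finset α) : (B \ F) ∪ (B ∩ F) = B := by
  ext x
  simp only [Finset.mem_union, Finset.mem_sdiff, Finset.mem_inter]
  tauto

lemma contrBasis_of_basis (hM : IsMatroidOn E ℬ) (hF : F ⊆ E) {B : Finset α}
    (hB : B ∈ ℬ) (hrb : B ∩ F ∈ restrBases ℬ F) : B \ F ∈ contrBases E ℬ F := by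
  rw [mem_contrBases_iff]
  refine ⟨Finset.sdiff_subset_sdiff (hM.2.1 B hB) (le_refl _), B ∩ F, hrb, ?_⟩
  rw [sdiff_union_inter_basis]
  exact hB

lemma fund_circuit_contr_eq (hM : IsMatroidOn E ℬ) (hF : F ⊆ E) {B : Finset α}
    (hB : B ∈ ℬ) (hrb : B ∩ F ∈ restrBases ℬ F) {f : α} (hfB : f ∉ B)
    {C Z : Finset α} (hC : Circuit E ℬ C) (hCsub : C ⊆ insert f B)
    (hZ : Circuit (E \ F) (contrBases E ℬ F) Z) (hZsub : Z ⊆ insert f (B \ F))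
    (hfZ : f ∈ Z) : Z = C \ F := by
  have hZEF : Z ⊆ E \ F := hZ.1
  have hZdep : ¬ Indep ℬ (Z ∪ (B ∩ F)) := by
    intro h
    exact hZ.2.1 ((indep_contr_iff hM hF hrb).mpr ⟨hZEF, h⟩)
  have hZJsubE : Z ∪ (B ∩ F) ⊆ E := Finset.union_subset (hZEF.trans Finset.sdiff_subset)
    ((Finset.inter_subset_left).trans (hM.2.1 B hB))
  obtain ⟨C'', hC'', hC''sub⟩ := exists_circuit hM hZJsubE hZdep
  have hfC'' : f ∈ C'' := by
    by_contra hf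
    have hsub : C'' ⊆ (Z.erase f) ∪ (B ∩ F) := by
      intro x hx
      rcases Finset.mem_union.mp (hC''sub hx) with h | h
      · exact Finset.mem_union_left _ (Finset.mem_erase.mpr ⟨fun hh => hf (hh ▸ hx), h⟩)
      · exact Finset.mem_union_right _ h
    have hZf : Indep (contrBases E ℬ F) (Z.erase f) := hZ.2.2 _ (Finset.erase_ssubset hfZ)
    obtain ⟨-, hind⟩ := (indep_contr_iff hM hF hrb).mp hZf
    exact hC''.2.1 (indep_mono hind hsub)
  have hC''B : C'' ⊆ insert f B := by
    intro x hx
    rcases Finset.mem_union.mp (hC''sub hx) with h | h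
    · rcases Finset.mem_insert.mp (hZsub h) with rfl | h2
      · exact Finset.mem_insert_self _ _
      · exact Finset.mem_insert_of_mem (Finset.mem_sdiff.mp h2).1
    · exact Finset.mem_insert_of_mem (Finset.mem_inter.mp h).1
  have hCC'' : C = C'' := circuit_unique hM (indep_of_mem hB) hC hC'' hCsub hC''B
  subst hCC''
  have hCFsub : C \ F ⊆ Z := by
    intro x hx
    rw [Finset.mem_sdiff] at hx
    rcases Finset.mem_union.mp (hC''sub hx.1) with h | h
    · exact h
    · exact absurd ((Finset.mem_inter.mp h).2) hx.2
  have hCFdep : ¬ Indep (contrBases E ℬ F) (C \ F) := by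
    refine contr_dep_of_circuit hM hF hrb hC ?_
    intro x hx
    rw [Finset.mem_inter] at hx
    rcases Finset.mem_union.mp (hC''sub hx.1) with h | h
    · exact absurd hx.2 (Finset.mem_sdiff.mp (hZEF h)).2
    · exact h
  by_contra hne
  have hss : C \ F ⊂ Z := Finset.ssubset_iff_subset_ne.mpr ⟨hCFsub, fun h => hne h.symm⟩
  exact hCFdep (hZ.2.2 _ hss)

lemma flat_eq_clo (hM : IsMatroidOn E ℬ) {B : Finset α}
    (hFlat : Flat E ℬ F) (hrb : B ∩ F ∈ restrBases ℬ F) : F = clo E ℬ (B ∩ F) := by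
  have hFE : F ⊆ E := hFlat.1
  refine le_antisymm (fun x hx => restrBasis_spans hM hFE hrb hx) ?_
  intro x hx
  by_contra hxF
  have hxE : x ∈ E := clo_subset_ground (Finset.inter_subset_right.trans hFE) hx
  have hrkF : rank ℬ F = rank ℬ (B ∩ F) := by
    have h1 : rank ℬ (B ∩ F) ≤ rank ℬ F := rank_mono Finset.inter_subset_right
    have h2 : rank ℬ F ≤ rank ℬ (clo E ℬ (B ∩ F)) :=
      rank_mono fun y hy => restrBasis_spans hM hFE hrb hy
    rw [rank_clo hM] at h2
    omega
  have hins : insert x F ⊆ clo E ℬ (B ∩ F) :=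
    Finset.insert_subset hx fun y hy => restrBasis_spans hM hFE hrb hy
  have h3 : rank ℬ (insert x F) ≤ rank ℬ (B ∩ F) := by
    have := rank_mono (ℬ := ℬ) hins
    rwa [rank_clo hM] at this
  have h4 : rank ℬ F ≤ rank ℬ (insert x F) := rank_mono (Finset.subset_insert _ _)
  exact hFlat.2 x (Finset.mem_sdiff.mpr ⟨hxE, hxF⟩) (by omega)

end Minor

def Valid (E : Finset α) (ℬ : Finset (Finset α)) (σ : α → ℕ) (B F : Finset α) : Prop :=
  CyclicFlat E ℬ F ∧
    B ∩ F ∈ restrBases ℬ F ∧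
    (∀ e ∈ F, ¬ IntActive F (restrBases ℬ F) σ (B ∩ F) e) ∧
    B \ F ∈ contrBases E ℬ F ∧
    (∀ e ∈ E \ F, ¬ ExtActive (E \ F) (contrBases E ℬ F) σ (B \ F) e)

section Main
variable {E : Finset α} {ℬ : Finset (Finset α)} {σ : α → ℕ} {B : Finset α}

lemma uniq_aux (hM : IsMatroidOn E ℬ) (hσ : Function.Injective σ) (hB : B ∈ ℬ)
    {F G : Finset α} (hF : Valid E ℬ σ B F) (hG : Valid E ℬ σ B G) {e : α}
    (heF : e ∈ F) (heG : e ∉ G)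
    (hmin : ∀ x, ((x ∈ F ∧ x ∉ G) ∨ (x ∈ G ∧ x ∉ F)) → σ e ≤ σ x) : False := by
  have hFE : F ⊆ E := hF.1.1.1
  have hGE : G ⊆ E := hG.1.1.1
  have heE : e ∈ E := hFE heF
  have hrbF : B ∩ F ∈ restrBases ℬ F := hF.2.1
  have hrbG : B ∩ G ∈ restrBases ℬ G := hG.2.1
  by_cases heB : e ∈ B
  · -- internal case
    have heBF : e ∈ B ∩ F := Finset.mem_inter.mpr ⟨heB, heF⟩
    have hMF : IsMatroidOn F (restrBases ℬ F) := isMatroidOn_restr hM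
    have hD : Cocircuit F (restrBases ℬ F) (fundCocircuit F (restrBases ℬ F) (B ∩ F) e) :=
      fundCocircuit_cocircuit hMF hrbF heBF
    have hDsub : fundCocircuit F (restrBases ℬ F) (B ∩ F) e ⊆ insert e (F \ (B ∩ F)) :=
      fundCocircuit_subset
    have hnact := hF.2.2.1 e heF
    rw [IntActive] at hnact
    push_neg at hnact
    have hnmin := hnact heBF _ hD hDsub
    rw [IsMinOf] at hnmin
    push_neg at hnmin
    obtain ⟨f, hfD, hfe⟩ := hnmin (mem_fundCocircuit_self e)
    have hfe' : f ≠ e := by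
      intro h
      subst h
      omega
    obtain ⟨hfBF, hfbasis⟩ := basis_of_mem_fundCocircuit hfD hfe'
    have hfF : f ∈ F := by
      rcases Finset.mem_insert.mp (hDsub hfD) with h | h
      · exact absurd h hfe'
      · exact (Finset.mem_sdiff.mp h).1
    have hfB : f ∉ B := fun h => hfBF (Finset.mem_inter.mpr ⟨h, hfF⟩)
    have hfG : f ∈ G := by
      by_contra hfG
      have := hmin f (Or.inl ⟨hfF, hfG⟩)
      omega
    -- G side: fundamental circuit of f w.r.t. B ∩ G
    have hfBG : f ∉ B ∩ G := fun h => hfB (Finset.mem_inter.mp h).1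
    have hdep : ¬ Indep ℬ (insert f (B ∩ G)) :=
      (mem_restrBases_iff.mp hrbG).2.2 f hfG hfBG
    have hindBG : Indep ℬ (B ∩ G) := indep_mono (indep_of_mem hB) Finset.inter_subset_left
    have hsubE : insert f (B ∩ G) ⊆ E :=
      Finset.insert_subset (hFE hfF) (Finset.inter_subset_left.trans (hM.2.1 B hB))
    obtain ⟨Cf, hCf, hCfsub, hfCf⟩ := exists_fund_circuit hM hindBG hsubE hdep
    -- F side: B - e + f is a basis of M
    have hBnew : (B \ F) ∪ (insert f ((B ∩ F).erase e)) ∈ ℬ :=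
      contr_union_basis hM hFE hF.2.2.2.1 hfbasis
    have hBeq : (B \ F) ∪ (insert f ((B ∩ F).erase e)) = insert f (B.erase e) := by
      ext x
      simp only [Finset.mem_union, Finset.mem_sdiff, Finset.mem_insert, Finset.mem_erase,
        Finset.mem_inter]
      constructor
      · rintro (⟨hx1, hx2⟩ | (rfl | ⟨hx1, hx2⟩))
        · exact Or.inr ⟨fun h => hx2 (h ▸ heF), hx1⟩
        · exact Or.inl rfl
        · exact Or.inr ⟨hx1, hx2.1⟩
      · rintro (rfl | ⟨hx1, hx2⟩)
        · exact Or.inr (Or.inl rfl)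
        · by_cases hxF : x ∈ F
          · exact Or.inr (Or.inr ⟨hx1, hx2, hxF⟩)
          · exact Or.inl ⟨hx2, hxF⟩
    rw [hBeq] at hBnew
    have heCf : e ∈ Cf := by
      by_contra heCf
      refine hCf.2.1 (indep_mono (indep_of_mem hBnew) fun x hx => ?_)
      rcases Finset.mem_insert.mp (hCfsub hx) with rfl | h
      · exact Finset.mem_insert_self _ _
      · refine Finset.mem_insert_of_mem (Finset.mem_erase.mpr
          ⟨fun hh => heCf (hh ▸ hx), (Finset.mem_inter.mp h).1⟩)
    rcases Finset.mem_insert.mp (hCfsub heCf) with h | h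
    · exact hfe' h.symm
    · exact heG (Finset.mem_inter.mp h).2
  · -- external case
    have heBF : e ∉ B ∩ F := fun h => heB (Finset.mem_inter.mp h).1
    have hdep : ¬ Indep ℬ (insert e (B ∩ F)) :=
      (mem_restrBases_iff.mp hrbF).2.2 e heF heBF
    have hindBF : Indep ℬ (B ∩ F) := indep_mono (indep_of_mem hB) Finset.inter_subset_left
    have hsubE : insert e (B ∩ F) ⊆ E :=
      Finset.insert_subset heE (Finset.inter_subset_left.trans (hM.2.1 B hB))
    obtain ⟨C, hC, hCsub, heC⟩ := exists_fund_circuit hM hindBF hsubE hdep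
    have hCF : C ⊆ F := hCsub.trans (Finset.insert_subset heF Finset.inter_subset_right)
    -- contract G
    have hCG : C ∩ G ⊆ B ∩ G := by
      intro x hx
      rw [Finset.mem_inter] at hx
      rcases Finset.mem_insert.mp (hCsub hx.1) with rfl | h
      · exact absurd hx.2 heG
      · exact Finset.mem_inter.mpr ⟨(Finset.mem_inter.mp h).1, hx.2⟩
    have hCGdep : ¬ Indep (contrBases E ℬ G) (C \ G) :=
      contr_dep_of_circuit hM hGE hrbG hC hCG
    have hCGsubE : C \ G ⊆ E \ G :=
      Finset.sdiff_subset_sdiff (hC.1) (le_refl _)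
    have hMC : IsMatroidOn (E \ G) (contrBases E ℬ G) := isMatroidOn_contr hM hGE
    obtain ⟨Z, hZ, hZsub⟩ := exists_circuit hMC hCGsubE hCGdep
    have hBGc : B \ G ∈ contrBases E ℬ G := hG.2.2.2.1
    have heZ : e ∈ Z := by
      by_contra heZ
      refine hZ.2.1 (indep_mono (indep_of_mem hBGc) fun x hx => ?_)
      have hx2 := hZsub hx
      rw [Finset.mem_sdiff] at hx2
      rcases Finset.mem_insert.mp (hCsub hx2.1) with rfl | h
      · exact absurd hx heZ
      · exact Finset.mem_sdiff.mpr ⟨(Finset.mem_inter.mp h).1, hx2.2⟩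
    have hZBG : Z ⊆ insert e (B \ G) := by
      intro x hx
      have hx2 := hZsub hx
      rw [Finset.mem_sdiff] at hx2
      rcases Finset.mem_insert.mp (hCsub hx2.1) with rfl | h
      · exact Finset.mem_insert_self _ _
      · exact Finset.mem_insert_of_mem
          (Finset.mem_sdiff.mpr ⟨(Finset.mem_inter.mp h).1, hx2.2⟩)
    have hnact := hG.2.2.2.2 e (Finset.mem_sdiff.mpr ⟨heE, heG⟩)
    rw [ExtActive] at hnact
    push_neg at hnact
    have heBG : e ∉ B \ G := fun h => heB (Finset.mem_sdiff.mp h).1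
    have hnmin := hnact heBG Z hZ hZBG
    rw [IsMinOf] at hnmin
    push_neg at hnmin
    obtain ⟨g, hgZ, hge⟩ := hnmin heZ
    have hgF : g ∈ F := hCF (Finset.mem_sdiff.mp (hZsub hgZ)).1
    have hgG : g ∉ G := (Finset.mem_sdiff.mp (hZsub hgZ)).2
    have := hmin g (Or.inl ⟨hgF, hgG⟩)
    omega

lemma valid_unique (hM : IsMatroidOn E ℬ) (hσ : Function.Injective σ) (hB : B ∈ ℬ)
    {F G : Finset α} (hF : Valid E ℬ σ B F) (hG : Valid E ℬ σ B G) : F = G := by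
  by_contra hne
  have hT : ((F \ G) ∪ (G \ F)).Nonempty := by
    rw [Finset.nonempty_iff_ne_empty]
    intro h
    rw [Finset.union_eq_empty, Finset.sdiff_eq_empty_iff_subset,
      Finset.sdiff_eq_empty_iff_subset] at h
    exact hne (le_antisymm h.1 h.2)
  obtain ⟨e, heT, hemin⟩ := Finset.exists_min_image _ σ hT
  have hmin : ∀ x, ((x ∈ F ∧ x ∉ G) ∨ (x ∈ G ∧ x ∉ F)) → σ e ≤ σ x := by
    intro x hx
    refine hemin x ?_
    rw [Finset.mem_union, Finset.mem_sdiff, Finset.mem_sdiff]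
    exact hx
  rw [Finset.mem_union, Finset.mem_sdiff, Finset.mem_sdiff] at heT
  rcases heT with ⟨h1, h2⟩ | ⟨h1, h2⟩
  · exact uniq_aux hM hσ hB hF hG h1 h2 hmin
  · exact uniq_aux hM hσ hB hG hF h1 h2 fun x hx => hmin x (Or.symm hx)

lemma terminal_valid (hM : IsMatroidOn E ℬ) (hB : B ∈ ℬ) {S : Finset α}
    (hSB : S ⊆ B) (hScl : S = B ∩ clo E ℬ S)
    (hExt : ∀ f ∈ E \ clo E ℬ S,
      ¬ ExtActive (E \ clo E ℬ S) (contrBases E ℬ (clo E ℬ S)) σ (B \ clo E ℬ S) f)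
    (hInt : ∀ e ∈ clo E ℬ S,
      ¬ IntActive (clo E ℬ S) (restrBases ℬ (clo E ℬ S)) σ (B ∩ clo E ℬ S) e) :
    Valid E ℬ σ B (clo E ℬ S) := by
  have hSE : S ⊆ E := hSB.trans (hM.2.1 B hB)
  have hFE : clo E ℬ S ⊆ E := clo_subset_ground hSE
  have hSind : Indep ℬ S := indep_mono (indep_of_mem hB) hSB
  have hrkF : rank ℬ (clo E ℬ S) = S.card := by
    rw [rank_clo hM, rank_eq_card_of_indep hSind]
  have hrbS : S ∈ restrBases ℬ (clo E ℬ S) :=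
    restr_basis_of_card hM subset_clo hSind hrkF.symm
  have hrb' : B ∩ clo E ℬ S ∈ restrBases ℬ (clo E ℬ S) := hScl ▸ hrbS
  refine ⟨⟨flat_clo hM hSE, ?_⟩, hrb', hInt, contrBasis_of_basis hM hFE hB hrb', hExt⟩
  intro x hxF
  by_cases hxS : x ∈ S
  · -- x ∈ S : use non-activity to find a circuit through x
    have hxBF : x ∈ B ∩ clo E ℬ S := hScl ▸ hxS
    have hMF : IsMatroidOn (clo E ℬ S) (restrBases ℬ (clo E ℬ S)) := isMatroidOn_restr hM
    have hD := fundCocircuit_cocircuit hMF hrb' hxBF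
    have hnact := hInt x hxF
    rw [IntActive] at hnact
    push_neg at hnact
    have hnmin := hnact hxBF _ hD fundCocircuit_subset
    rw [IsMinOf] at hnmin
    push_neg at hnmin
    obtain ⟨g, hgD, hgx⟩ := hnmin (mem_fundCocircuit_self x)
    have hgx' : g ≠ x := by
      intro h
      subst h
      omega
    obtain ⟨hgBF, hgbasis⟩ := basis_of_mem_fundCocircuit hgD (fun h => hgx' h)
    have hJ₂ := hgbasis
    have hxJ₂ : x ∉ insert g ((B ∩ clo E ℬ S).erase x) := by
      intro h
      rcases Finset.mem_insert.mp h with h1 | h1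
      · exact hgx' h1.symm
      · exact (Finset.mem_erase.mp h1).1 rfl
    have hdep : ¬ Indep ℬ (insert x (insert g ((B ∩ clo E ℬ S).erase x))) :=
      (mem_restrBases_iff.mp hJ₂).2.2 x hxF hxJ₂
    have hJ₂ind : Indep ℬ (insert g ((B ∩ clo E ℬ S).erase x)) :=
      (mem_restrBases_iff.mp hJ₂).2.1
    have hsubE : insert x (insert g ((B ∩ clo E ℬ S).erase x)) ⊆ E :=
      Finset.insert_subset (hFE hxF) (((mem_restrBases_iff.mp hJ₂).1).trans hFE)
    obtain ⟨C, hC, hCsub, hxC⟩ := exists_fund_circuit hM hJ₂ind hsubE hdep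
    refine ⟨C, hC, ?_, hxC⟩
    refine hCsub.trans (Finset.insert_subset hxF ((mem_restrBases_iff.mp hJ₂).1))
  · -- x ∉ S : x depends on S, fundamental circuit
    have hdep : ¬ Indep ℬ (insert x S) :=
      insert_dep_of_mem_clo hM hSind (le_refl S) (rank_eq_card_of_indep hSind).symm hxF hxS
    have hsubE : insert x S ⊆ E := Finset.insert_subset (hFE hxF) hSE
    obtain ⟨C, hC, hCsub, hxC⟩ := exists_fund_circuit hM hSind hsubE hdep
    exact ⟨C, hC, hCsub.trans (Finset.insert_subset hxF subset_clo), hxC⟩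

lemma exists_valid (hM : IsMatroidOn E ℬ) (hσ : Function.Injective σ) (hB : B ∈ ℬ) :
    ∃ F, Valid E ℬ σ B F := by
  suffices H : ∀ n (S : Finset α), S ⊆ B → S = B ∩ clo E ℬ S →
      (∀ f ∈ E \ clo E ℬ S,
        ¬ ExtActive (E \ clo E ℬ S) (contrBases E ℬ (clo E ℬ S)) σ (B \ clo E ℬ S) f) →
      S.card ≤ n → ∃ F, Valid E ℬ σ B F by
    refine H B.card B (le_refl _) ?_ ?_ (le_refl _)
    · exact le_antisymm (Finset.subset_inter (le_refl _) subset_clo)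
        Finset.inter_subset_left
    · intro f hf
      exfalso
      rw [Finset.mem_sdiff] at hf
      refine hf.2 (mem_clo_of_rank hf.1 ?_)
      have h1 : rank ℬ (insert f B) ≤ B.card := rank_le_basis_card hM hB _
      have h2 : rank ℬ B ≤ rank ℬ (insert f B) := rank_mono (Finset.subset_insert _ _)
      have h3 : rank ℬ B = B.card := rank_eq_card_of_indep (indep_of_mem hB)
      omega
  intro n
  induction n with
  | zero =>
    intro S hSB hScl hExt hc
    refine ⟨_, terminal_valid hM hB hSB hScl hExt ?_⟩
    intro e he hact
    have heS : e ∈ S := hScl ▸ hact.1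
    rw [Finset.card_eq_zero.mp (by omega : S.card = 0)] at heS
    exact absurd heS (Finset.notMem_empty e)
  | succ n ih =>
    intro S hSB hScl hExt hc
    by_cases hInt : ∀ e ∈ clo E ℬ S,
        ¬ IntActive (clo E ℬ S) (restrBases ℬ (clo E ℬ S)) σ (B ∩ clo E ℬ S) e
    · exact ⟨_, terminal_valid hM hB hSB hScl hExt hInt⟩
    push_neg at hInt
    obtain ⟨e, heF, hact⟩ := hInt
    obtain ⟨heBF, C, hC, hCsub, hCmin⟩ := hact
    have heS : e ∈ S := hScl ▸ heBF
    have hSE : S ⊆ E := hSB.trans (hM.2.1 B hB)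
    have hFE : clo E ℬ S ⊆ E := clo_subset_ground hSE
    have hSind : Indep ℬ S := indep_mono (indep_of_mem hB) hSB
    have hrkF : rank ℬ (clo E ℬ S) = S.card := by
      rw [rank_clo hM, rank_eq_card_of_indep hSind]
    have hrbS : S ∈ restrBases ℬ (clo E ℬ S) :=
      restr_basis_of_card hM subset_clo hSind hrkF.symm
    have hrb' : B ∩ clo E ℬ S ∈ restrBases ℬ (clo E ℬ S) := hScl ▸ hrbS
    have hMF : IsMatroidOn (clo E ℬ S) (restrBases ℬ (clo E ℬ S)) := isMatroidOn_restr hM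
    have hCeq : C = fundCocircuit (clo E ℬ S) (restrBases ℬ (clo E ℬ S)) (B ∩ clo E ℬ S) e :=
      cocircuit_eq_fundCocircuit hMF hrb' heBF hC hCsub
    have hminD : ∀ g ∈ fundCocircuit (clo E ℬ S) (restrBases ℬ (clo E ℬ S))
        (B ∩ clo E ℬ S) e, σ e ≤ σ g := hCeq ▸ hCmin.2
    -- pass to S' = S.erase e
    have hS'B : S.erase e ⊆ B := (Finset.erase_subset _ _).trans hSB
    have hS'ind : Indep ℬ (S.erase e) := indep_mono hSind (Finset.erase_subset _ _)
    have hS'E : S.erase e ⊆ E := hS'B.trans (hM.2.1 B hB)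
    have hF'E : clo E ℬ (S.erase e) ⊆ E := clo_subset_ground hS'E
    have hF'F : clo E ℬ (S.erase e) ⊆ clo E ℬ S := clo_mono hM (Finset.erase_subset _ _)
    have heF' : e ∉ clo E ℬ (S.erase e) := by
      intro h
      have hdep : ¬ Indep ℬ (insert e (S.erase e)) :=
        insert_dep_of_mem_clo hM hS'ind (le_refl _)
          (rank_eq_card_of_indep hS'ind).symm h (Finset.notMem_erase _ _)
      rw [Finset.insert_erase heS] at hdep
      exact hdep hSind
    have hS'cl : S.erase e = B ∩ clo E ℬ (S.erase e) := by
      refine le_antisymm (Finset.subset_inter hS'B subset_clo) ?_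
      intro x hx
      rw [Finset.mem_inter] at hx
      by_contra hxS'
      have hdep : ¬ Indep ℬ (insert x (S.erase e)) :=
        insert_dep_of_mem_clo hM hS'ind (le_refl _)
          (rank_eq_card_of_indep hS'ind).symm hx.2 hxS'
      exact hdep (indep_mono (indep_of_mem hB) (Finset.insert_subset hx.1 hS'B))
    have hrkF' : rank ℬ (clo E ℬ (S.erase e)) = (S.erase e).card := by
      rw [rank_clo hM, rank_eq_card_of_indep hS'ind]
    have hrbS' : S.erase e ∈ restrBases ℬ (clo E ℬ (S.erase e)) :=
      restr_basis_of_card hM subset_clo hS'ind hrkF'.symm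
    have hrb'' : B ∩ clo E ℬ (S.erase e) ∈ restrBases ℬ (clo E ℬ (S.erase e)) :=
      hS'cl ▸ hrbS'
    refine ih (S.erase e) hS'B hS'cl ?_ ?_
    swap
    · rw [Finset.card_erase_of_mem heS]
      have h0 : 0 < S.card := Finset.card_pos.mpr ⟨e, heS⟩
      omega
    intro f hf hact'
    obtain ⟨hfBF', Z, hZ, hZsub, hZmin⟩ := hact'
    rw [Finset.mem_sdiff] at hf
    have hfE : f ∈ E := hf.1
    have hfF' : f ∉ clo E ℬ (S.erase e) := hf.2
    have hfB : f ∉ B := by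
      intro h
      exact hfBF' (Finset.mem_sdiff.mpr ⟨h, hfF'⟩)
    have hfBdep : ¬ Indep ℬ (insert f B) := by
      intro h
      have h1 : (insert f B).card ≤ rank ℬ E := le_rank_of_indep h
        (Finset.insert_subset hfE (hM.2.1 B hB))
      have h2 : rank ℬ E ≤ B.card := rank_le_basis_card hM hB _
      rw [Finset.card_insert_of_notMem hfB] at h1
      omega
    obtain ⟨C0, hC0, hC0sub, hfC0⟩ := exists_fund_circuit hM (indep_of_mem hB)
      (Finset.insert_subset hfE (hM.2.1 B hB)) hfBdep
    have hfZ : f ∈ Z := hZmin.1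
    have hZeq : Z = C0 \ clo E ℬ (S.erase e) :=
      fund_circuit_contr_eq hM hF'E hB hrb'' hfB hC0 hC0sub hZ hZsub hfZ
    by_cases hfF : f ∈ clo E ℬ S
    · -- f ∈ F \ F' : use minimality of e in its fundamental cocircuit
      have hfS : f ∉ S := fun h => hfB (hSB h)
      have hdepfS : ¬ Indep ℬ (insert f S) :=
        insert_dep_of_mem_clo hM hSind (le_refl _)
          (rank_eq_card_of_indep hSind).symm hfF hfS
      obtain ⟨Cf, hCf, hCfsub, hfCf⟩ := exists_fund_circuit hM hSind
        (Finset.insert_subset hfE hSE) hdepfS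
      have hCfC0 : Cf = C0 := circuit_unique hM (indep_of_mem hB) hCf hC0
        (hCfsub.trans (Finset.insert_subset_insert _ hSB)) hC0sub
      have hfS' : f ∉ S.erase e := fun h => hfS (Finset.mem_of_mem_erase h)
      have hfS'ind : Indep ℬ (insert f (S.erase e)) := by
        refine indep_of_rank_eq hM.1 ?_
        rw [rank_insert_succ_of_notMem_clo hfE hfF',
          Finset.card_insert_of_notMem hfS', rank_eq_card_of_indep hS'ind]
      have heC0 : e ∈ C0 := by
        by_contra h
        refine hCf.2.1 (indep_mono hfS'ind fun x hx => ?_)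
        rcases Finset.mem_insert.mp (hCfsub hx) with rfl | h2
        · exact Finset.mem_insert_self _ _
        · refine Finset.mem_insert_of_mem (Finset.mem_erase.mpr
            ⟨fun hh => h (hh ▸ (hCfC0 ▸ hx)), h2⟩)
      have heZ : e ∈ Z := by
        rw [hZeq, Finset.mem_sdiff]
        exact ⟨heC0, heF'⟩
      have h1 : σ f ≤ σ e := hZmin.2 e heZ
      have hfclo : f ∈ clo E ℬ S := hfF
      have hJ₂ : insert f (S.erase e) ∈ restrBases ℬ (clo E ℬ S) := by
        refine restr_basis_of_card hM ?_ hfS'ind ?_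
        · exact Finset.insert_subset hfF ((Finset.erase_subset _ _).trans subset_clo)
        · rw [Finset.card_insert_of_notMem hfS', Finset.card_erase_of_mem heS, hrkF]
          have h0 : 0 < S.card := Finset.card_pos.mpr ⟨e, heS⟩
          omega
      have hBFerase : (B ∩ clo E ℬ S).erase e = S.erase e := by rw [← hScl]
      have hfD : f ∈ fundCocircuit (clo E ℬ S) (restrBases ℬ (clo E ℬ S))
          (B ∩ clo E ℬ S) e := by
        refine mem_fundCocircuit_of_basis hfF (fun h => hfB (Finset.mem_inter.mp h).1) ?_
        rw [hBFerase]
        exact hJ₂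
      have h2 : σ e ≤ σ f := hminD f hfD
      have hef : e = f := hσ (by omega)
      exact hfB (hef ▸ hSB heS)
    · -- f ∈ E \ F : use the invariant at F
      have hC0F : C0 ∩ clo E ℬ S ⊆ B ∩ clo E ℬ S := by
        intro x hx
        rw [Finset.mem_inter] at hx
        rcases Finset.mem_insert.mp (hC0sub hx.1) with rfl | h
        · exact absurd hx.2 hfF
        · exact Finset.mem_inter.mpr ⟨h, hx.2⟩
      have hdep₀ : ¬ Indep (contrBases E ℬ (clo E ℬ S)) (C0 \ clo E ℬ S) :=
        contr_dep_of_circuit hM hFE hrb' hC0 hC0F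
      have hsub₀ : C0 \ clo E ℬ S ⊆ E \ clo E ℬ S :=
        Finset.sdiff_subset_sdiff hC0.1 (le_refl _)
      obtain ⟨Z₀, hZ₀, hZ₀sub⟩ := exists_circuit (isMatroidOn_contr hM hFE) hsub₀ hdep₀
      have hBFc : B \ clo E ℬ S ∈ contrBases E ℬ (clo E ℬ S) :=
        contrBasis_of_basis hM hFE hB hrb'
      have hZ₀B : ∀ x ∈ Z₀, x ≠ f → x ∈ B \ clo E ℬ S := by
        intro x hx hxf
        have hx2 := hZ₀sub hx
        rw [Finset.mem_sdiff] at hx2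
        rcases Finset.mem_insert.mp (hC0sub hx2.1) with rfl | h
        · exact absurd rfl hxf
        · exact Finset.mem_sdiff.mpr ⟨h, hx2.2⟩
      have hfZ₀ : f ∈ Z₀ := by
        by_contra h
        exact hZ₀.2.1 (indep_mono (indep_of_mem hBFc)
          (fun x hx => hZ₀B x hx (fun hh => h (hh ▸ hx))))
      have hZ₀sub' : Z₀ ⊆ insert f (B \ clo E ℬ S) := by
        intro x hx
        by_cases hxf : x = f
        · exact hxf ▸ Finset.mem_insert_self _ _
        · exact Finset.mem_insert_of_mem (hZ₀B x hx hxf)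
      have hnact := hExt f (Finset.mem_sdiff.mpr ⟨hfE, hfF⟩)
      rw [ExtActive] at hnact
      push_neg at hnact
      have hnmin := hnact (fun h => hfB (Finset.mem_sdiff.mp h).1) Z₀ hZ₀ hZ₀sub'
      rw [IsMinOf] at hnmin
      push_neg at hnmin
      obtain ⟨g, hgZ₀, hgf⟩ := hnmin hfZ₀
      have hgZ : g ∈ Z := by
        rw [hZeq]
        have hg2 := hZ₀sub hgZ₀
        rw [Finset.mem_sdiff] at hg2 ⊢
        exact ⟨hg2.1, fun h => hg2.2 (hF'F h)⟩
      have := hZmin.2 g hgZ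
      omega

end Main

end Lemmas

/-- Etienne–Las Vergnas activity bipartition: for every basis `B` there is a unique
cyclic flat `F` such that `B ∩ F` is a basis of `M|F` with no internally active element
and `B \ F` is a basis of `M/F` with no externally active element. -/
theorem exists_unique_cyclicFlat_activity_bipartition
    (E : Finset α) (ℬ : Finset (Finset α)) (hM : IsMatroidOn E ℬ)
    (σ : α → ℕ) (hσ : Function.Injective σ)
    (B : Finset α) (hB : B ∈ ℬ) :
    ∃! F : Finset α, CyclicFlat E ℬ F ∧
      B ∩ F ∈ restrBases ℬ F ∧
      (∀ e ∈ F, ¬ IntActive F (restrBases ℬ F) σ (B ∩ F) e) ∧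
      B \ F ∈ contrBases E ℬ F ∧
      (∀ e ∈ E \ F, ¬ ExtActive (E \ F) (contrBases E ℬ F) σ (B \ F) e) := by
  obtain ⟨F, hF⟩ := exists_valid hM hσ hB
  refine ⟨F, hF, ?_⟩
  intro G hG
  exact valid_unique hM hσ hB hG hF

end TutteActivities
end
end
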